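/- arXiv:2012.07013 — 3 statements merged into one kernel-verified Lean document; each statement's English description precedes it below -/
import Mathlib

section
/- Let u ∈ C¹(Ω̄) and let x* ∈ Ω be a local minimum of u. Then for every ε > 0 there exists N > 0 such that ‖∇_n u(x*)‖ < ε for all n > N; in particular ∇_n u(x*) → 0 as n → ∞. -/
open MeasureTheory Filter Topology Metric

noncomputable section

abbrev Euc (D : ℕ) := EuclideanSpace ℝ (Fin D)

/-- The standing hypotheses on the sequence of radial kernels `ρ n`. -/
structure IsKernelSeq (D : ℕ) (ρ : ℕ → Euc D → ℝ) : Prop where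
  nonneg : ∀ n x, 0 ≤ ρ n x
  radial : ∀ n x y, ‖x‖ = ‖y‖ → ρ n x = ρ n y
  integral_one : ∀ n, ∫ x, ρ n x = 1
  tail : ∀ δ : ℝ, 0 < δ →
    Tendsto (fun n => ∫ x in {x : Euc D | δ < ‖x‖}, ρ n x) atTop (nhds 0)

/-- A bounded, connected, simply connected open domain. -/
structure NiceDomain (D : ℕ) (Ω : Set (Euc D)) : Prop where
  isOpen : IsOpen Ω
  bounded : Bornology.IsBounded Ω
  connected : IsConnected Ω
  simplyConnected : SimplyConnectedSpace Ω

/-- The nonlocal gradient of `u` over the set `Ω` with kernel `ρ`: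
`∇_ρ u(x) = D ∫_Ω ((u x - u y)/‖x-y‖) ((x-y)/‖x-y‖) ρ(x-y) dy`. -/
def nlGrad (D : ℕ) (Ω : Set (Euc D)) (ρ : Euc D → ℝ) (u : Euc D → ℝ) (x : Euc D) : Euc D :=
  (D : ℝ) • ∫ y in Ω, (((u x - u y) / ‖x - y‖ ^ 2) * ρ (x - y)) • (x - y)

/-- if `u ∈ C¹(Ω̄)` and `x* ∈ Ω` is a local minimum of `u`, then for every
`ε > 0` there is `N` with `‖∇_n u(x*)‖ < ε` for all `n > N`. -/
theorem nlGrad_small_at_localMin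
    (D : ℕ) (hD : 0 < D) (Ω : Set (Euc D)) (hΩ : NiceDomain D Ω)
    (ρ : ℕ → Euc D → ℝ) (hρ : IsKernelSeq D ρ)
    (u : Euc D → ℝ) (hu : ContDiffOn ℝ 1 u (closure Ω))
    (xstar : Euc D) (hx : xstar ∈ Ω) (hmin : IsLocalMinOn u Ω xstar) :
    ∀ ε : ℝ, 0 < ε → ∃ N : ℕ, ∀ n > N, ‖nlGrad D Ω (ρ n) u xstar‖ < ε := by
  intro ε hε
  have hDpos : (0 : ℝ) < D := by exact_mod_cast hD
  have hΩmeas : MeasurableSet Ω := hΩ.isOpen.measurableSet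
  have hΩnhds : Ω ∈ 𝓝 xstar := hΩ.isOpen.mem_nhds hx
  -- u has zero derivative at xstar
  have hdiff : DifferentiableAt ℝ u xstar :=
    (hu.differentiableOn one_ne_zero).differentiableAt
      (mem_of_superset hΩnhds subset_closure)
  have hder0 : HasFDerivAt u (0 : Euc D →L[ℝ] ℝ) xstar := by
    have h0 := (hmin.isLocalMin hΩnhds).hasFDerivAt_eq_zero hdiff.hasFDerivAt
    rw [← h0]; exact hdiff.hasFDerivAt
  -- the constant c and the radius δ for the near-field estimate
  set c : ℝ := ε / (2 * D) with hc
  have hcpos : 0 < c := by positivity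
  have hev : ∀ᶠ y in 𝓝 xstar, ‖u y - u xstar - (0 : Euc D →L[ℝ] ℝ) (y - xstar)‖ ≤ c * ‖y - xstar‖ :=
    hder0.isLittleO.def hcpos
  obtain ⟨δ, hδpos, hδ⟩ := Metric.eventually_nhds_iff.mp hev
  have hnear : ∀ y : Euc D, ‖xstar - y‖ < δ → |u xstar - u y| ≤ c * ‖xstar - y‖ := by
    intro y hy
    have h1 : dist y xstar < δ := by
      rw [dist_eq_norm, ← norm_neg]; simpa [neg_sub] using hy
    have := hδ h1
    simp only [ContinuousLinearMap.zero_apply, sub_zero] at this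
    calc |u xstar - u y| = ‖u y - u xstar‖ := by rw [Real.norm_eq_abs, abs_sub_comm]
      _ ≤ c * ‖y - xstar‖ := this
      _ = c * ‖xstar - y‖ := by rw [← norm_neg (y - xstar), neg_sub]
  -- bound on u over the closure
  obtain ⟨M0, hM0⟩ := (hΩ.bounded.isCompact_closure).exists_bound_of_continuousOn hu.continuousOn
  set K : ℝ := 2 * M0 + 1 with hK
  have hM0nn : 0 ≤ M0 := le_trans (norm_nonneg _) (hM0 xstar (subset_closure hx))
  have hKpos : 0 < K := by positivity
  have hfar : ∀ y ∈ Ω, |u xstar - u y| ≤ K := by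
    intro y hy
    calc |u xstar - u y| ≤ ‖u xstar‖ + ‖u y‖ := by
          rw [Real.norm_eq_abs, Real.norm_eq_abs]; exact abs_sub _ _
      _ ≤ M0 + M0 := add_le_add (hM0 xstar (subset_closure hx)) (hM0 y (subset_closure hy))
      _ ≤ K := by rw [hK]; linarith
  -- integrability of the kernels
  have hρint : ∀ n, Integrable (ρ n) := fun n => integrable_of_integral_eq_one (hρ.integral_one n)
  have hρc : ∀ n, Integrable (fun y => ρ n (xstar - y)) := fun n => (hρint n).comp_sub_left xstar
  have hρΩ : ∀ n, IntegrableOn (fun y => ρ n (xstar - y)) Ω := fun n => (hρc n).integrableOn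
  -- the tail integrals
  set t : ℕ → ℝ := fun n => ∫ z in {z : Euc D | δ / 2 < ‖z‖}, ρ n z with ht
  set c2 : ℝ := ε * δ / (4 * D * K) with hc2
  have hc2pos : 0 < c2 := by positivity
  obtain ⟨N, hN⟩ := eventually_atTop.mp ((hρ.tail (δ / 2) (by positivity)).eventually_lt_const hc2pos)
  refine ⟨N, fun n hn => ?_⟩
  have htn : t n < c2 := hN n (le_of_lt hn)
  -- sets
  set F : Set (Euc D) := {y | δ ≤ ‖xstar - y‖} with hF
  have hFmeas : MeasurableSet F :=
    measurableSet_le measurable_const ((measurable_const.sub measurable_id).norm)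
  set S : Set (Euc D) := {z : Euc D | δ ≤ ‖z‖} with hS
  have hSmeas : MeasurableSet S := measurableSet_le measurable_const measurable_norm
  -- the pointwise norm of the integrand
  set f : Euc D → Euc D := fun y =>
    (((u xstar - u y) / ‖xstar - y‖ ^ 2) * ρ n (xstar - y)) • (xstar - y) with hf
  set g : Euc D → ℝ := fun y => (|u xstar - u y| / ‖xstar - y‖) * ρ n (xstar - y) with hg
  have hnorm : ∀ y, ‖f y‖ = g y := by
    intro y
    by_cases hxy : y = xstar
    · simp [hf, hg, hxy]
    · have hr : (0 : ℝ) < ‖xstar - y‖ := by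
        rw [norm_pos_iff]; intro h; exact hxy (by rwa [sub_eq_zero, eq_comm] at h)
      have hrne : ‖xstar - y‖ ≠ 0 := ne_of_gt hr
      rw [hf, hg]
      simp only [norm_smul, Real.norm_eq_abs, abs_mul, abs_div, abs_of_nonneg (hρ.nonneg n _),
        abs_pow, abs_norm]
      field_simp
  have hgnonneg : ∀ y, 0 ≤ g y := fun y =>
    mul_nonneg (div_nonneg (abs_nonneg _) (norm_nonneg _)) (hρ.nonneg n _)
  -- pointwise bound of g on Ω
  set h : Euc D → ℝ := fun y =>
    c * ρ n (xstar - y) + (K / δ) * F.indicator (fun y => ρ n (xstar - y)) y with hh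
  have hgh : ∀ y ∈ Ω, g y ≤ h y := by
    intro y hy
    have hρnn : 0 ≤ ρ n (xstar - y) := hρ.nonneg n _
    by_cases hyF : δ ≤ ‖xstar - y‖
    · have h1 : |u xstar - u y| / ‖xstar - y‖ ≤ K / δ := by
        apply div_le_div₀ (le_of_lt hKpos) (hfar y hy) hδpos hyF
      have h2 : g y ≤ (K / δ) * ρ n (xstar - y) :=
        mul_le_mul_of_nonneg_right h1 hρnn
      rw [hh]
      simp only [Set.indicator_of_mem (show y ∈ F from hyF)]
      nlinarith [mul_nonneg (le_of_lt hcpos) hρnn]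
    · push_neg at hyF
      have h1 : |u xstar - u y| / ‖xstar - y‖ ≤ c := by
        rcases eq_or_lt_of_le (norm_nonneg (xstar - y)) with hr | hr
        · rw [← hr]; simp [le_of_lt hcpos]
        · rw [div_le_iff₀ hr]; exact hnear y hyF
      have h2 : g y ≤ c * ρ n (xstar - y) := mul_le_mul_of_nonneg_right h1 hρnn
      rw [hh]
      simp only [Set.indicator_of_notMem (show y ∉ F from not_le.mpr hyF)]
      simpa using h2
  -- integrability of g and h on Ω
  have hhint : IntegrableOn h Ω := by
    apply Integrable.add ((hρΩ n).const_mul c)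
    exact (((hρΩ n).indicator hFmeas).const_mul (K / δ))
  have hgmeas : AEStronglyMeasurable g (volume.restrict Ω) := by
    have h1 : AEStronglyMeasurable (fun y => |u xstar - u y|) (volume.restrict Ω) := by
      have : ContinuousOn (fun y => |u xstar - u y|) Ω :=
        (continuousOn_const.sub ((hu.continuousOn).mono subset_closure)).abs
      exact this.aestronglyMeasurable hΩmeas
    have h2 : AEStronglyMeasurable (fun y : Euc D => (‖xstar - y‖)⁻¹) (volume.restrict Ω) :=
      ((measurable_const.sub measurable_id).norm.inv).aestronglyMeasurable
    have h3 : AEStronglyMeasurable (fun y => ρ n (xstar - y)) (volume.restrict Ω) :=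
      (hρc n).aestronglyMeasurable.restrict
    have : g = fun y => (|u xstar - u y| * (‖xstar - y‖)⁻¹) * ρ n (xstar - y) := by
      funext y; simp only [hg, div_eq_mul_inv]
    rw [this]
    exact (h1.mul h2).mul h3
  have hgint : IntegrableOn g Ω := by
    apply Integrable.mono' hhint hgmeas
    rw [ae_restrict_iff' hΩmeas]
    filter_upwards with y hy
    rw [Real.norm_eq_abs, abs_of_nonneg (hgnonneg y)]
    exact hgh y hy
  -- key integral bounds
  have hI1 : ∫ y in Ω, ρ n (xstar - y) ≤ 1 := by
    calc ∫ y in Ω, ρ n (xstar - y) ≤ ∫ y, ρ n (xstar - y) :=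
          setIntegral_le_integral (hρc n) (Eventually.of_forall fun y => hρ.nonneg n _)
      _ = ∫ y, ρ n y := integral_sub_left_eq_self (E := ℝ) (ρ n) volume xstar
      _ = 1 := hρ.integral_one n
  have hI2 : ∫ y in Ω ∩ F, ρ n (xstar - y) ≤ t n := by
    have e1 : ∫ y in Ω ∩ F, ρ n (xstar - y) ≤ ∫ y in F, ρ n (xstar - y) :=
      setIntegral_mono_set (hρc n).integrableOn
        (Eventually.of_forall fun y => hρ.nonneg n _)
        (HasSubset.Subset.eventuallyLE Set.inter_subset_right)
    have e2 : ∫ y in F, ρ n (xstar - y) = ∫ z in S, ρ n z := by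
      rw [← integral_indicator hFmeas, ← integral_indicator hSmeas]
      rw [← integral_sub_left_eq_self (E := ℝ) (S.indicator (ρ n)) volume xstar]
      congr 1
    have e3 : ∫ z in S, ρ n z ≤ t n := by
      apply setIntegral_mono_set (hρint n).integrableOn
        (Eventually.of_forall fun y => hρ.nonneg n _)
      apply HasSubset.Subset.eventuallyLE
      intro z hz
      have : δ ≤ ‖z‖ := hz
      show δ / 2 < ‖z‖
      linarith
    linarith [e1, e2.le, e2.ge, e3]
  -- integral of h
  have hhval : ∫ y in Ω, h y =
      c * (∫ y in Ω, ρ n (xstar - y)) + (K / δ) * ∫ y in Ω ∩ F, ρ n (xstar - y) := by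
    rw [hh, integral_add ((hρΩ n).const_mul c) (((hρΩ n).indicator hFmeas).const_mul (K / δ)),
      integral_const_mul, integral_const_mul, setIntegral_indicator hFmeas]
  -- assemble
  have hmain : ∫ y in Ω, g y ≤ c + (K / δ) * t n := by
    calc ∫ y in Ω, g y ≤ ∫ y in Ω, h y := setIntegral_mono_on hgint hhint hΩmeas hgh
      _ = c * (∫ y in Ω, ρ n (xstar - y)) + (K / δ) * ∫ y in Ω ∩ F, ρ n (xstar - y) := hhval
      _ ≤ c * 1 + (K / δ) * t n := by
          apply add_le_add
          · exact mul_le_mul_of_nonneg_left hI1 (le_of_lt hcpos)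
          · exact mul_le_mul_of_nonneg_left hI2 (by positivity)
      _ = c + (K / δ) * t n := by ring
  have hnormle : ‖nlGrad D Ω (ρ n) u xstar‖ ≤ D * (c + (K / δ) * t n) := by
    rw [nlGrad]
    rw [norm_smul, Real.norm_eq_abs, abs_of_nonneg (le_of_lt hDpos)]
    apply mul_le_mul_of_nonneg_left _ (le_of_lt hDpos)
    calc ‖∫ y in Ω, (((u xstar - u y) / ‖xstar - y‖ ^ 2) * ρ n (xstar - y)) • (xstar - y)‖
        ≤ ∫ y in Ω, ‖f y‖ := norm_integral_le_integral_norm _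
      _ = ∫ y in Ω, g y := by simp only [hnorm]
      _ ≤ c + (K / δ) * t n := hmain
  have hfinal : (D : ℝ) * (c + (K / δ) * t n) < ε := by
    have h1 : (K / δ) * t n < (K / δ) * c2 := by
      apply mul_lt_mul_of_pos_left htn (by positivity)
    have h2 : (D : ℝ) * (K / δ) * c2 = ε / 4 := by
      rw [hc2]; field_simp
    have h3 : (D : ℝ) * c = ε / 2 := by rw [hc]; field_simp
    nlinarith
  exact lt_of_le_of_lt hnormle hfinal

end
end

section
/- Let u ∈ C²(Ω) ∩ Lip(Ω, M), and run classical gradient descent x^{k+1} = x^k − α^k ∇u(x^k) and nonlocal gradient descent x^{k+1,n} = x^{k,n} − α^k ∇_n u(x^{k,n}) from the same initial point x^0 = x^{0,n} for all n, with the same stepsizes α^k > 0 satisfying Σ_{m=1}^K α^m < 1 for every K > 0, all iterates remaining in a compact subset of Ω. Then for each k and each ε > 0 there exists N > 0 such that for all n > N, ‖x^m − x^{m,n}‖ < ε for m = 1, …, k+1. -/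
open MeasureTheory Filter Topology Metric

noncomputable section

set_option maxHeartbeats 1000000

namespace NLAux
variable {D : ℕ}

lemma norm_sq_eq (z : Euc D) : ‖z‖ ^ 2 = ∑ i, z i ^ 2 := by
  rw [EuclideanSpace.norm_eq, Real.sq_sqrt (by positivity)]
  simp [Real.norm_eq_abs, sq_abs]

lemma coord_abs_le_norm (z : Euc D) (i : Fin D) : |z i| ≤ ‖z‖ := by
  rw [← Real.sqrt_sq_eq_abs, EuclideanSpace.norm_eq]
  apply Real.sqrt_le_sqrt
  simpa [Real.norm_eq_abs, sq_abs] using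
    Finset.single_le_sum (f := fun j => z j ^ 2) (fun j _ => by positivity) (Finset.mem_univ i)

def nflipLM (j : Fin D) : Euc D →ₗ[ℝ] Euc D where
  toFun z := WithLp.toLp 2 (fun k => if k = j then -z k else z k)
  map_add' a b := by ext k; by_cases h : k = j <;> simp [h, PiLp.add_apply] <;> ring
  map_smul' c a := by ext k; by_cases h : k = j <;> simp [h, PiLp.smul_apply, mul_neg]

lemma nflipLM_involutive (j : Fin D) : Function.Involutive (nflipLM j) := by
  intro z; ext k; by_cases h : k = j <;> simp [nflipLM, h]

def nflip (j : Fin D) : Euc D ≃ₗᵢ[ℝ] Euc D where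
  toLinearEquiv := LinearEquiv.ofInvolutive (nflipLM j) (nflipLM_involutive j)
  norm_map' := by
    intro z
    rw [EuclideanSpace.norm_eq, EuclideanSpace.norm_eq]
    congr 1
    refine Finset.sum_congr rfl fun k _ => ?_
    show ‖(nflipLM j z) k‖ ^ 2 = _
    by_cases h : k = j <;> simp [nflipLM, h]

lemma nflip_apply (j : Fin D) (z : Euc D) (k : Fin D) :
    nflip j z k = if k = j then -z k else z k := rfl

end NLAux

namespace Test
variable {D : ℕ}
open NLAux

lemma nflip_mp (j : Fin D) : MeasurePreserving (nflip j) (volume) (volume) :=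
  (nflip j).measurePreserving

lemma nflip_emb (j : Fin D) : MeasurableEmbedding (nflip j) :=
  (nflip j).toHomeomorph.measurableEmbedding

lemma J_zero {ρ : Euc D → ℝ}
    (hrad : ∀ a b : Euc D, ‖a‖ = ‖b‖ → ρ a = ρ b) (δ : ℝ) {i j : Fin D} (hij : i ≠ j) :
    ∫ z in ball (0 : Euc D) δ, (z i * z j / ‖z‖ ^ 2) * ρ z = 0 := by
  set F : Euc D → ℝ := fun z => (z i * z j / ‖z‖ ^ 2) * ρ z with hF
  have hpre : (nflip j) ⁻¹' (ball (0 : Euc D) δ) = ball 0 δ := by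
    ext z; simp [mem_ball_zero_iff, (nflip j).norm_map]
  have key : ∫ z in ball (0 : Euc D) δ, F z =
      ∫ z in ball (0 : Euc D) δ, F ((nflip j) z) := by
    rw [← (nflip_mp j).setIntegral_preimage_emb (nflip_emb j) F (ball 0 δ), hpre]
  have hodd : ∀ z : Euc D, F ((nflip j) z) = - F z := by
    intro z
    have h1 : (nflip j z) i = z i := by simp [nflip_apply, hij]
    have h2 : (nflip j z) j = - z j := by simp [nflip_apply]
    have h3 : ‖nflip j z‖ = ‖z‖ := (nflip j).norm_map z
    have h4 : ρ (nflip j z) = ρ z := hrad _ _ h3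
    simp only [hF, h1, h2, h3, h4]; ring
  simp only [hodd, integral_neg] at key
  linarith
end Test

namespace Test2
variable {D : ℕ}
open NLAux

example (hD : 0 < D) : (volume ({(0 : Euc D)} : Set (Euc D))) = 0 := by
  haveI : Nonempty (Fin D) := ⟨⟨0, hD⟩⟩
  exact measure_singleton 0

lemma J_diag_swap {ρ : Euc D → ℝ}
    (hrad : ∀ a b : Euc D, ‖a‖ = ‖b‖ → ρ a = ρ b) (δ : ℝ) (i j : Fin D) :
    ∫ z in ball (0 : Euc D) δ, (z i * z i / ‖z‖ ^ 2) * ρ z =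
    ∫ z in ball (0 : Euc D) δ, (z j * z j / ‖z‖ ^ 2) * ρ z := by
  set σ : Euc D ≃ₗᵢ[ℝ] Euc D := LinearIsometryEquiv.piLpCongrLeft 2 ℝ ℝ (Equiv.swap i j) with hσ
  have happ : ∀ (z : Euc D) (k : Fin D), σ z k = z (Equiv.swap i j k) := by
    intro z k
    simp [hσ, Equiv.piCongrLeft', Equiv.symm_swap]
  have hpre : σ ⁻¹' (ball (0 : Euc D) δ) = ball 0 δ := by
    ext z; simp [mem_ball_zero_iff, σ.norm_map]
  have key := σ.measurePreserving.setIntegral_preimage_emb σ.toHomeomorph.measurableEmbedding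
      (fun z : Euc D => (z j * z j / ‖z‖ ^ 2) * ρ z) (ball 0 δ)
  rw [hpre] at key
  rw [← key]
  refine setIntegral_congr_fun measurableSet_ball fun z _ => ?_
  have h3 : ‖σ z‖ = ‖z‖ := σ.norm_map z
  rw [happ z j, Equiv.swap_apply_right, h3, hrad _ _ h3]
end Test2

namespace Test3
variable {D : ℕ}
open NLAux Test Test2

lemma F_int {ρ : Euc D → ℝ} (hρi : Integrable ρ) (i j : Fin D) :
    Integrable (fun z : Euc D => (z i * z j / ‖z‖ ^ 2) * ρ z) := by
  have hmeas : Measurable (fun z : Euc D => z i * z j / ‖z‖ ^ 2) := by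
    exact (((EuclideanSpace.proj i).continuous.measurable).mul
      ((EuclideanSpace.proj j).continuous.measurable)).div
      ((continuous_norm.pow 2).measurable)
  refine (hρi.abs.mono' (hmeas.aestronglyMeasurable.mul hρi.aestronglyMeasurable) ?_)
  refine Filter.Eventually.of_forall fun z => ?_
  rw [Real.norm_eq_abs, abs_mul]
  have h1 : |z i * z j / ‖z‖ ^ 2| ≤ 1 := by
    rcases eq_or_ne z 0 with rfl | hz
    · simp
    · rw [abs_div, abs_mul]
      have hzpos : (0:ℝ) < ‖z‖ := norm_pos_iff.mpr hz
      rw [div_le_one (by positivity)]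
      have := coord_abs_le_norm z i
      have := coord_abs_le_norm z j
      have : |z i| * |z j| ≤ ‖z‖ * ‖z‖ := by
        apply mul_le_mul (coord_abs_le_norm z i) (coord_abs_le_norm z j) (abs_nonneg _)
          (norm_nonneg _)
      calc |z i| * |z j| ≤ ‖z‖ * ‖z‖ := this
        _ = |‖z‖ ^ 2| := by rw [abs_of_nonneg (by positivity)]; ring
  calc |z i * z j / ‖z‖ ^ 2| * |ρ z| ≤ 1 * |ρ z| :=
        mul_le_mul_of_nonneg_right h1 (abs_nonneg _)
    _ = |ρ z| := one_mul _

lemma J_diag (hD : 0 < D) {ρ : Euc D → ℝ} (hρi : Integrable ρ)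
    (hrad : ∀ a b : Euc D, ‖a‖ = ‖b‖ → ρ a = ρ b) (δ : ℝ) (k : Fin D) :
    (D : ℝ) * ∫ z in ball (0 : Euc D) δ, (z k * z k / ‖z‖ ^ 2) * ρ z =
      ∫ z in ball (0 : Euc D) δ, ρ z := by
  haveI : Nonempty (Fin D) := ⟨⟨0, hD⟩⟩
  have hsum : ∑ i : Fin D, ∫ z in ball (0 : Euc D) δ, (z i * z i / ‖z‖ ^ 2) * ρ z =
      (D : ℝ) * ∫ z in ball (0 : Euc D) δ, (z k * z k / ‖z‖ ^ 2) * ρ z := by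
    rw [Finset.sum_congr rfl fun i _ => J_diag_swap hrad δ i k]
    simp [Finset.sum_const, nsmul_eq_mul]
  rw [← hsum, ← integral_finset_sum _ (fun i _ => (F_int hρi i i).integrableOn)]
  have hae : ∀ᵐ z : Euc D, z ≠ (0 : Euc D) := by
    rw [ae_iff]
    simpa using measure_singleton (0 : Euc D)
  refine setIntegral_congr_ae measurableSet_ball ?_
  filter_upwards [hae] with z hz _
  have hzpos : (0:ℝ) < ‖z‖ := norm_pos_iff.mpr hz
  have hn : ‖z‖ ^ 2 ≠ 0 := by positivity
  have : ∑ i : Fin D, (z i * z i / ‖z‖ ^ 2) * ρ z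
      = ((∑ i : Fin D, z i ^ 2) / ‖z‖ ^ 2) * ρ z := by
    rw [Finset.sum_div, Finset.sum_mul]
    refine Finset.sum_congr rfl fun i _ => by ring
  rw [this, ← norm_sq_eq, div_self hn, one_mul]

lemma Phi_int {ρ : Euc D → ℝ} (hρi : Integrable ρ) (g : Euc D) (δ : ℝ) :
    Integrable (fun z : Euc D => (((inner ℝ g z : ℝ)) / ‖z‖ ^ 2 * ρ z) • z)
      (volume.restrict (ball (0 : Euc D) δ)) := by
    have hmeas : Measurable (fun z : Euc D => (inner ℝ g z : ℝ) / ‖z‖ ^ 2) := by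
      exact ((continuous_const.inner continuous_id).measurable).div
        ((continuous_norm.pow 2).measurable)
    refine Integrable.mono' ((hρi.abs.const_mul ‖g‖).restrict)
      (((hmeas.aestronglyMeasurable.mul hρi.aestronglyMeasurable).smul
        continuous_id.aestronglyMeasurable).restrict) ?_
    refine Filter.Eventually.of_forall fun z => ?_
    rcases eq_or_ne z 0 with rfl | hz
    · simp; positivity
    · have hzpos : (0:ℝ) < ‖z‖ := norm_pos_iff.mpr hz
      rw [norm_smul, Real.norm_eq_abs, abs_mul, abs_div]
      have hCS : |(inner ℝ g z : ℝ)| ≤ ‖g‖ * ‖z‖ := abs_real_inner_le_norm g z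
      have h1 : |(inner ℝ g z : ℝ)| / |‖z‖ ^ 2| * |ρ z| * ‖z‖ ≤ (‖g‖ * ‖z‖) / ‖z‖^2 * |ρ z| * ‖z‖ := by
        rw [abs_of_nonneg (a := ‖z‖^2) (by positivity)]
        gcongr
      refine h1.trans (le_of_eq ?_)
      field_simp

lemma radial_vec (hD : 0 < D) {ρ : Euc D → ℝ} (hρi : Integrable ρ)
    (hrad : ∀ a b : Euc D, ‖a‖ = ‖b‖ → ρ a = ρ b) (g : Euc D) (δ : ℝ) :
    (D : ℝ) • (∫ z in ball (0 : Euc D) δ, (((inner ℝ g z : ℝ)) / ‖z‖ ^ 2 * ρ z) • z) =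
      (∫ z in ball (0 : Euc D) δ, ρ z) • g := by
  have hinner : ∀ z : Euc D, (inner ℝ g z : ℝ) = ∑ i : Fin D, g i * z i := by
    intro z
    simp [PiLp.inner_apply, RCLike.inner_apply, conj_trivial, mul_comm]
  have hΦint := Phi_int hρi g δ
  have hproj : ∀ k : Fin D,
      (∫ z in ball (0 : Euc D) δ, (((inner ℝ g z : ℝ)) / ‖z‖ ^ 2 * ρ z) • z) k
      = ∑ i : Fin D, g i * ∫ z in ball (0 : Euc D) δ, (z i * z k / ‖z‖ ^ 2) * ρ z := by
    intro k
    have h1 : (∫ z in ball (0 : Euc D) δ, (((inner ℝ g z : ℝ)) / ‖z‖ ^ 2 * ρ z) • z) k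
        = (EuclideanSpace.proj k : Euc D →L[ℝ] ℝ)
            (∫ z in ball (0 : Euc D) δ, (((inner ℝ g z : ℝ)) / ‖z‖ ^ 2 * ρ z) • z) := rfl
    rw [h1, ← ContinuousLinearMap.integral_comp_comm _ hΦint]
    have h2 : ∀ z : Euc D, (EuclideanSpace.proj k : Euc D →L[ℝ] ℝ)
        ((((inner ℝ g z : ℝ)) / ‖z‖ ^ 2 * ρ z) • z)
        = ∑ i : Fin D, g i * ((z i * z k / ‖z‖ ^ 2) * ρ z) := by
      intro z
      have : (EuclideanSpace.proj k : Euc D →L[ℝ] ℝ)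
          ((((inner ℝ g z : ℝ)) / ‖z‖ ^ 2 * ρ z) • z)
          = (((inner ℝ g z : ℝ)) / ‖z‖ ^ 2 * ρ z) * z k := by
        simp [smul_eq_mul]
      rw [this, hinner, Finset.sum_div, Finset.sum_mul, Finset.sum_mul]
      exact Finset.sum_congr rfl fun i _ => by ring
    rw [integral_congr_ae (Filter.Eventually.of_forall h2),
      integral_finset_sum _ (fun i _ => ((F_int hρi i k).const_mul (g i)).integrableOn)]
    exact Finset.sum_congr rfl fun i _ => integral_const_mul _ _
  ext k
  show ((D : ℝ) • (∫ z in ball (0 : Euc D) δ, (((inner ℝ g z : ℝ)) / ‖z‖ ^ 2 * ρ z) • z)) k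
      = ((∫ z in ball (0 : Euc D) δ, ρ z) • g) k
  rw [PiLp.smul_apply, PiLp.smul_apply, smul_eq_mul, smul_eq_mul, hproj k,
    Finset.sum_eq_single k (fun i _ hik => by rw [J_zero hrad δ hik, mul_zero])
      (fun h => absurd (Finset.mem_univ k) h)]
  rw [← mul_assoc, mul_comm (D : ℝ) (g k), mul_assoc, J_diag hD hρi hrad δ k, mul_comm]
end Test3

namespace Test4
open NLAux Test Test2 Test3

lemma key (D : ℕ) (hD : 0 < D) (Ω : Set (Euc D)) (hopen : IsOpen Ω)
    (ρ : ℕ → Euc D → ℝ) (hρ : IsKernelSeq D ρ) (M : ℝ) (u : Euc D → ℝ)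
    (hC2 : ContDiffOn ℝ 2 u Ω)
    (hLip : ∀ x ∈ Ω, ∀ y ∈ Ω, |u x - u y| ≤ M * ‖x - y‖)
    (V : Set (Euc D)) (hV : IsCompact V) (hVΩ : V ⊆ Ω) :
    ∀ ε : ℝ, 0 < ε → ∃ N : ℕ, ∀ n > N, ∀ x ∈ V,
      ‖nlGrad D Ω (ρ n) u x - gradient u x‖ < ε := by
  -- preliminaries
  set M' := max M 0 with hM'def
  have hM'0 : 0 ≤ M' := le_max_right _ _
  have hLip' : ∀ x ∈ Ω, ∀ y ∈ Ω, |u x - u y| ≤ M' * ‖x - y‖ := fun a ha b hb =>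
    (hLip a ha b hb).trans (mul_le_mul_of_nonneg_right (le_max_left _ _) (norm_nonneg _))
  have hρint : ∀ n, Integrable (ρ n) := by
    intro n
    by_contra h
    have := hρ.integral_one n
    rw [integral_undef h] at this
    exact one_ne_zero this.symm
  obtain ⟨r, hr0, hrsub⟩ := hV.exists_thickening_subset_open hopen hVΩ
  set K := cthickening (r / 2) V with hKdef
  have hK : IsCompact K := hV.cthickening
  have hVK : V ⊆ K := self_subset_cthickening V
  have hKΩ : K ⊆ Ω :=
    (cthickening_subset_thickening' hr0 (half_lt_self hr0) V).trans hrsub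
  have hballΩ : ∀ x ∈ V, ball x r ⊆ Ω := by
    intro x hx y hy
    exact hrsub (mem_thickening_iff.2 ⟨x, hx, by simpa [dist_comm] using hy⟩)
  have hdiff : ∀ w ∈ Ω, DifferentiableAt ℝ u w := fun w hw =>
    (hC2.contDiffAt (hopen.mem_nhds hw)).differentiableAt (by norm_num)
  have hf'cont : ContinuousOn (fun w => fderiv ℝ u w) Ω :=
    hC2.continuousOn_fderiv_of_isOpen hopen (by norm_num)
  have huc : UniformContinuousOn (fun w => fderiv ℝ u w) K :=
    hK.uniformContinuousOn_of_continuous (hf'cont.mono hKΩ)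
  have hgc : ContinuousOn (gradient u) Ω := by
    have : gradient u = fun w => (InnerProductSpace.toDual ℝ (Euc D)).symm (fderiv ℝ u w) := rfl
    rw [this]
    exact (InnerProductSpace.toDual ℝ (Euc D)).symm.continuous.comp_continuousOn hf'cont
  obtain ⟨B, hB⟩ := hV.exists_bound_of_continuousOn (hgc.mono hVΩ)
  set B' := max B 0 with hB'def
  have hB'0 : 0 ≤ B' := le_max_right _ _
  have hgB : ∀ x ∈ V, ‖gradient u x‖ ≤ B' := fun x hx => (hB x hx).trans (le_max_left _ _)
  intro ε hε
  set ε₁ := ε / (2 * (D + 1)) with hε₁def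
  have hε₁ : 0 < ε₁ := by positivity
  rw [Metric.uniformContinuousOn_iff] at huc
  obtain ⟨δ₀, hδ₀, hucδ⟩ := huc ε₁ hε₁
  set δ := min (δ₀ / 2) (r / 2) with hδdef
  have hδ0 : 0 < δ := lt_min (by positivity) (by positivity)
  have hδr : δ ≤ r / 2 := min_le_right _ _
  have hδδ₀ : δ < δ₀ := lt_of_le_of_lt (min_le_left _ _) (by linarith)
  set c₂ := ε / (2 * (B' + D * M' + 1)) with hc₂def
  have hc₂ : 0 < c₂ := by positivity
  have htail := hρ.tail (δ / 2) (by positivity)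
  rw [Metric.tendsto_atTop] at htail
  obtain ⟨N, hN⟩ := htail c₂ hc₂
  refine ⟨N, fun n hn x hx => ?_⟩
  have hxΩ : x ∈ Ω := hVΩ hx
  set g := gradient u x with hgdef
  have hgB' : ‖g‖ ≤ B' := hgB x hx
  set tn := ∫ z in {z : Euc D | δ / 2 < ‖z‖}, ρ n z with htndef
  have htn : tn < c₂ := by
    have h1 := hN n (le_of_lt hn)
    rw [Real.dist_eq, sub_zero] at h1
    exact (le_abs_self _).trans_lt h1
  have htmeas : MeasurableSet {z : Euc D | δ / 2 < ‖z‖} :=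
    (isOpen_lt continuous_const continuous_norm).measurableSet
  have htn0 : 0 ≤ tn :=
    setIntegral_nonneg htmeas fun z _ => hρ.nonneg n z
  have mp : MeasurePreserving (fun y : Euc D => x - y) volume volume :=
    Measure.measurePreserving_sub_left volume x
  have emb : MeasurableEmbedding (fun y : Euc D => x - y) :=
    (MeasurableEquiv.subLeft x).measurableEmbedding
  have hcomp_int : Integrable (fun y : Euc D => ρ n (x - y)) :=
    (mp.integrable_comp_emb emb).2 (hρint n)
  -- the integrand of the nonlocal gradient
  set H : Euc D → Euc D :=
    fun y => (((u x - u y) / ‖x - y‖ ^ 2) * ρ n (x - y)) • (x - y) with hHdef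
  have hHnorm : ∀ y ∈ Ω, ‖H y‖ ≤ M' * ρ n (x - y) := by
    intro y hy
    rcases eq_or_ne y x with rfl | hyx
    · simp [hHdef, mul_nonneg hM'0 (hρ.nonneg n _)]
    · have hd : (0:ℝ) < ‖x - y‖ := by
        rw [norm_pos_iff, sub_ne_zero]; exact fun h => hyx h.symm
      rw [hHdef, norm_smul, Real.norm_eq_abs, abs_mul, abs_div,
        abs_of_nonneg (hρ.nonneg n _), abs_of_nonneg (a := ‖x - y‖ ^ 2) (by positivity)]
      have hL := hLip' x hxΩ y hy
      calc |u x - u y| / ‖x - y‖ ^ 2 * ρ n (x - y) * ‖x - y‖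
          = |u x - u y| / ‖x - y‖ * ρ n (x - y) := by field_simp
        _ ≤ M' * ρ n (x - y) := by
            apply mul_le_mul_of_nonneg_right _ (hρ.nonneg n _)
            rw [div_le_iff₀ hd]
            linarith [hL]
  have hHmeas : AEStronglyMeasurable H (volume.restrict Ω) := by
    have h1 : AEStronglyMeasurable (fun y : Euc D => (u x - u y) / ‖x - y‖ ^ 2)
        (volume.restrict Ω) := by
      have ha : AEStronglyMeasurable (fun y : Euc D => u x - u y) (volume.restrict Ω) :=
        (continuousOn_const.sub (hC2.continuousOn)).aestronglyMeasurable hopen.measurableSet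
      have hb : AEStronglyMeasurable (fun y : Euc D => (‖x - y‖ ^ 2)⁻¹) (volume.restrict Ω) :=
        (((continuous_const.sub continuous_id).norm.pow 2).measurable.inv).aestronglyMeasurable.restrict
      simp only [div_eq_mul_inv]
      exact ha.mul hb
    have h2 : AEStronglyMeasurable (fun y : Euc D => ρ n (x - y)) (volume.restrict Ω) :=
      hcomp_int.aestronglyMeasurable.restrict
    exact ((h1.mul h2).smul
      ((continuous_const.sub continuous_id).aestronglyMeasurable.restrict))
  have hHint : IntegrableOn H Ω := by
    refine Integrable.mono' ((hcomp_int.const_mul M').restrict) hHmeas ?_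
    rw [ae_restrict_iff' hopen.measurableSet]
    exact Filter.Eventually.of_forall hHnorm
  -- splitting of the domain
  have hballΩ' : ball x δ ⊆ Ω := by
    refine subset_trans (ball_subset_ball ?_) (hballΩ x hx)
    linarith
  have hsplit : ∫ y in Ω, H y = (∫ y in ball x δ, H y) + ∫ y in Ω \ ball x δ, H y := by
    rw [← setIntegral_union disjoint_sdiff_self_right
      (hopen.measurableSet.diff measurableSet_ball)
      (hHint.mono_set hballΩ') (hHint.mono_set Set.diff_subset)]
    rw [Set.union_diff_cancel hballΩ']
  -- far bound
  have hfar : ‖∫ y in Ω \ ball x δ, H y‖ ≤ M' * tn := by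
    have hsub : Ω \ ball x δ ⊆ (fun y : Euc D => x - y) ⁻¹' {z : Euc D | δ / 2 < ‖z‖} := by
      intro y hy
      have h1 : ¬ dist y x < δ := by simpa [mem_ball] using hy.2
      rw [dist_eq_norm] at h1
      have h2 : δ ≤ ‖y - x‖ := not_lt.1 h1
      simp only [Set.mem_preimage, Set.mem_setOf_eq]
      rw [show x - y = -(y - x) by abel, norm_neg]
      linarith
    have h1 : ‖∫ y in Ω \ ball x δ, H y‖ ≤ ∫ y in Ω \ ball x δ, M' * ρ n (x - y) := by
      refine norm_integral_le_of_norm_le ((hcomp_int.const_mul M').restrict) ?_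
      rw [ae_restrict_iff' (hopen.measurableSet.diff measurableSet_ball)]
      exact Filter.Eventually.of_forall fun y hy => hHnorm y hy.1
    have h2 : ∫ y in Ω \ ball x δ, M' * ρ n (x - y)
        ≤ ∫ y in (fun y : Euc D => x - y) ⁻¹' {z : Euc D | δ / 2 < ‖z‖}, M' * ρ n (x - y) := by
      refine setIntegral_mono_set ((hcomp_int.const_mul M').integrableOn)
        (Filter.Eventually.of_forall fun y => mul_nonneg hM'0 (hρ.nonneg n _))
        (HasSubset.Subset.eventuallyLE hsub)
    have h3 : ∫ y in (fun y : Euc D => x - y) ⁻¹' {z : Euc D | δ / 2 < ‖z‖}, M' * ρ n (x - y)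
        = M' * tn := by
      rw [mp.setIntegral_preimage_emb emb (fun z => M' * ρ n z) _, htndef]
      exact integral_const_mul _ _
    linarith
  -- change of variables on the ball
  have hnear : ∫ y in ball x δ, H y
      = ∫ z in ball (0 : Euc D) δ, ((u x - u (x - z)) / ‖z‖ ^ 2 * ρ n z) • z := by
    have hpre : (fun z : Euc D => x - z) ⁻¹' ball x δ = ball 0 δ := by
      ext z
      simp [mem_ball, dist_eq_norm, sub_sub_cancel]
    rw [← mp.setIntegral_preimage_emb emb H (ball x δ), hpre]
    refine setIntegral_congr_fun measurableSet_ball fun z _ => ?_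
    simp only [hHdef, sub_sub_cancel]
  -- pairing between gradient and derivative
  have hf'g : ∀ z : Euc D, (fderiv ℝ u x) z = (inner ℝ g z : ℝ) := by
    intro z
    have : g = (InnerProductSpace.toDual ℝ (Euc D)).symm (fderiv ℝ u x) := rfl
    rw [this, InnerProductSpace.toDual_symm_apply]
  -- Taylor remainder bound
  have hRem : ∀ z : Euc D, z ∈ ball (0 : Euc D) δ →
      |u x - u (x - z) - (inner ℝ g z : ℝ)| ≤ ε₁ * ‖z‖ := by
    intro z hz
    have hz' : ‖z‖ < δ := by simpa [mem_ball_zero_iff] using hz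
    have hxz : x - z ∈ ball x δ := by
      simp only [mem_ball, dist_eq_norm]
      rw [show x - z - x = -z by abel, norm_neg]
      exact hz'
    have hxball : x ∈ ball x δ := mem_ball_self hδ0
    have hbound : ∀ w ∈ ball x δ, ‖fderiv ℝ u w - fderiv ℝ u x‖ ≤ ε₁ := by
      intro w hw
      have hwK : w ∈ K := by
        refine closedBall_subset_cthickening hx (r / 2) ?_
        exact mem_closedBall.2 (le_trans (le_of_lt (mem_ball.1 hw)) hδr)
      have hxK : x ∈ K := hVK hx
      have hdist : dist w x < δ₀ := lt_trans (mem_ball.1 hw) hδδ₀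
      have := hucδ w hwK x hxK hdist
      rw [dist_eq_norm] at this
      exact this.le
    have hmv := Convex.norm_image_sub_le_of_norm_hasFDerivWithin_le'
      (fun w hw => ((hdiff w (hballΩ' hw)).hasFDerivAt.hasFDerivWithinAt))
      hbound (convex_ball x δ) hxball hxz
    have heq : u (x - z) - u x - (fderiv ℝ u x) ((x - z) - x)
        = -(u x - u (x - z) - (inner ℝ g z : ℝ)) := by
      rw [show (x - z) - x = -z by abel, map_neg, hf'g z]
      ring
    rw [heq, show (x - z) - x = -z by abel, norm_neg] at hmv
    simpa [Real.norm_eq_abs, abs_neg] using hmv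
  -- near-field decomposition
  set Φ : Euc D → Euc D := fun z => (((inner ℝ g z : ℝ)) / ‖z‖ ^ 2 * ρ n z) • z with hΦdef
  set E : Euc D → Euc D :=
    fun z => ((u x - u (x - z) - (inner ℝ g z : ℝ)) / ‖z‖ ^ 2 * ρ n z) • z with hEdef
  have hsplit2 : ∀ z : Euc D,
      ((u x - u (x - z)) / ‖z‖ ^ 2 * ρ n z) • z = Φ z + E z := by
    intro z
    rw [hΦdef, hEdef]
    simp only
    rw [← add_smul]
    congr 1
    ring
  have hΦint : Integrable Φ (volume.restrict (ball (0 : Euc D) δ)) := Phi_int (hρint n) g δ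
  have hEb : ∀ z : Euc D, z ∈ ball (0 : Euc D) δ → ‖E z‖ ≤ ε₁ * ρ n z := by
    intro z hz
    rcases eq_or_ne z 0 with rfl | hz0
    · simp only [hEdef, smul_zero, norm_zero]
      exact mul_nonneg hε₁.le (hρ.nonneg n 0)
    · have hzpos : (0:ℝ) < ‖z‖ := norm_pos_iff.mpr hz0
      rw [hEdef]
      simp only
      rw [norm_smul, Real.norm_eq_abs, abs_mul, abs_div, abs_of_nonneg (hρ.nonneg n _),
        abs_of_nonneg (a := ‖z‖ ^ 2) (by positivity)]
      have hR := hRem z hz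
      calc |u x - u (x - z) - (inner ℝ g z : ℝ)| / ‖z‖ ^ 2 * ρ n z * ‖z‖
          = |u x - u (x - z) - (inner ℝ g z : ℝ)| / ‖z‖ * ρ n z := by field_simp
        _ ≤ ε₁ * ρ n z := by
            refine mul_le_mul_of_nonneg_right ?_ (hρ.nonneg n _)
            rw [div_le_iff₀ hzpos]
            linarith
  have hEmeas : AEStronglyMeasurable E (volume.restrict (ball (0 : Euc D) δ)) := by
    have hmapsto : ∀ z ∈ ball (0 : Euc D) δ, x - z ∈ Ω := by
      intro z hz
      refine hballΩ' ?_
      simp only [mem_ball, dist_eq_norm]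
      rw [show x - z - x = -z by abel, norm_neg]
      simpa [mem_ball_zero_iff] using hz
    have hu2 : ContinuousOn (fun z : Euc D => u x - u (x - z) - (inner ℝ g z : ℝ))
        (ball (0 : Euc D) δ) := by
      refine (continuousOn_const.sub ?_).sub
        ((continuous_const.inner continuous_id).continuousOn)
      exact (hC2.continuousOn).comp
        ((continuous_const.sub continuous_id).continuousOn) hmapsto
    have hb : AEStronglyMeasurable (fun z : Euc D => (‖z‖ ^ 2)⁻¹)
        (volume.restrict (ball (0 : Euc D) δ)) :=
      ((continuous_norm.pow 2).measurable.inv).aestronglyMeasurable.restrict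
    have hρm : AEStronglyMeasurable (ρ n) (volume.restrict (ball (0 : Euc D) δ)) :=
      (hρint n).aestronglyMeasurable.restrict
    simp only [hEdef, div_eq_mul_inv]
    exact (((hu2.aestronglyMeasurable measurableSet_ball).mul hb).mul hρm).smul
      (continuous_id.aestronglyMeasurable.restrict)
  have hEint : IntegrableOn E (ball (0 : Euc D) δ) := by
    refine Integrable.mono' (((hρint n).const_mul ε₁).restrict) hEmeas ?_
    rw [ae_restrict_iff' measurableSet_ball]
    exact Filter.Eventually.of_forall hEb
  have hEbound : ‖∫ z in ball (0 : Euc D) δ, E z‖ ≤ ε₁ := by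
    have h1 : ‖∫ z in ball (0 : Euc D) δ, E z‖ ≤ ∫ z in ball (0 : Euc D) δ, ε₁ * ρ n z := by
      refine norm_integral_le_of_norm_le (((hρint n).const_mul ε₁).restrict) ?_
      rw [ae_restrict_iff' measurableSet_ball]
      exact Filter.Eventually.of_forall hEb
    have h2 : ∫ z in ball (0 : Euc D) δ, ε₁ * ρ n z
        = ε₁ * ∫ z in ball (0 : Euc D) δ, ρ n z := integral_const_mul _ _
    have h3 : ∫ z in ball (0 : Euc D) δ, ρ n z ≤ 1 := by
      rw [← hρ.integral_one n]
      exact setIntegral_le_integral (hρint n)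
        (Filter.Eventually.of_forall fun z => hρ.nonneg n z)
    have h4 : ε₁ * ∫ z in ball (0 : Euc D) δ, ρ n z ≤ ε₁ * 1 :=
      mul_le_mul_of_nonneg_left h3 hε₁.le
    linarith
  -- ball mass
  set cc := ∫ z in (ball (0 : Euc D) δ)ᶜ, ρ n z with hccdef
  have hmass : ∫ z in ball (0 : Euc D) δ, ρ n z = 1 - cc := by
    have h := integral_add_compl (s := ball (0 : Euc D) δ) (f := ρ n)
      (μ := (volume : Measure (Euc D))) measurableSet_ball (hρint n)
    rw [hρ.integral_one n] at h
    rw [hccdef]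
    linarith
  have hcc0 : 0 ≤ cc :=
    setIntegral_nonneg measurableSet_ball.compl fun z _ => hρ.nonneg n z
  have hcc : cc ≤ tn := by
    refine setIntegral_mono_set ((hρint n).integrableOn)
      (Filter.Eventually.of_forall fun z => hρ.nonneg n z)
      (HasSubset.Subset.eventuallyLE ?_)
    intro z hz
    simp only [Set.mem_compl_iff, mem_ball_zero_iff, not_lt] at hz
    simp only [Set.mem_setOf_eq]
    linarith
  have hA := radial_vec hD (hρint n) (fun a b => hρ.radial n a b) g δ
  rw [← hΦdef] at hA
  -- decomposition of the error
  have hdecomp : nlGrad D Ω (ρ n) u x - g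
      = (D : ℝ) • (∫ z in ball (0 : Euc D) δ, E z)
        + (D : ℝ) • (∫ y in Ω \ ball x δ, H y) - cc • g := by
    have h0 : nlGrad D Ω (ρ n) u x = (D : ℝ) • ∫ y in Ω, H y := rfl
    rw [h0, hsplit, hnear]
    have h1 : ∫ z in ball (0 : Euc D) δ, ((u x - u (x - z)) / ‖z‖ ^ 2 * ρ n z) • z
        = (∫ z in ball (0 : Euc D) δ, Φ z) + ∫ z in ball (0 : Euc D) δ, E z := by
      rw [← integral_add hΦint hEint]
      exact setIntegral_congr_fun measurableSet_ball fun z _ => hsplit2 z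
    rw [h1, smul_add, smul_add, hA, hmass, sub_smul, one_smul]
    module
  rw [hdecomp]
  have hn1 : ‖(D : ℝ) • (∫ z in ball (0 : Euc D) δ, E z)‖ ≤ (D : ℝ) * ε₁ := by
    rw [norm_smul, Real.norm_eq_abs, abs_of_nonneg (by positivity : (0:ℝ) ≤ (D:ℝ))]
    exact mul_le_mul_of_nonneg_left hEbound (by positivity)
  have hn2 : ‖(D : ℝ) • (∫ y in Ω \ ball x δ, H y)‖ ≤ (D : ℝ) * (M' * tn) := by
    rw [norm_smul, Real.norm_eq_abs, abs_of_nonneg (by positivity : (0:ℝ) ≤ (D:ℝ))]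
    exact mul_le_mul_of_nonneg_left hfar (by positivity)
  have hn3 : ‖cc • g‖ ≤ tn * B' := by
    rw [norm_smul, Real.norm_eq_abs, abs_of_nonneg hcc0]
    calc cc * ‖g‖ ≤ tn * ‖g‖ := mul_le_mul_of_nonneg_right hcc (norm_nonneg _)
      _ ≤ tn * B' := mul_le_mul_of_nonneg_left hgB' htn0
  have htotal : ‖(D : ℝ) • (∫ z in ball (0 : Euc D) δ, E z)
        + (D : ℝ) • (∫ y in Ω \ ball x δ, H y) - cc • g‖
      ≤ (D : ℝ) * ε₁ + (D : ℝ) * (M' * tn) + tn * B' := by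
    calc ‖(D : ℝ) • (∫ z in ball (0 : Euc D) δ, E z)
          + (D : ℝ) • (∫ y in Ω \ ball x δ, H y) - cc • g‖
        ≤ ‖(D : ℝ) • (∫ z in ball (0 : Euc D) δ, E z)
          + (D : ℝ) • (∫ y in Ω \ ball x δ, H y)‖ + ‖cc • g‖ := norm_sub_le _ _
      _ ≤ ‖(D : ℝ) • (∫ z in ball (0 : Euc D) δ, E z)‖
          + ‖(D : ℝ) • (∫ y in Ω \ ball x δ, H y)‖ + ‖cc • g‖ := by
          have := norm_add_le ((D : ℝ) • (∫ z in ball (0 : Euc D) δ, E z))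
            ((D : ℝ) • (∫ y in Ω \ ball x δ, H y))
          linarith
      _ ≤ (D : ℝ) * ε₁ + (D : ℝ) * (M' * tn) + tn * B' := by linarith
  -- final numeric estimate
  have hhalf1 : (D : ℝ) * ε₁ < ε / 2 := by
    have he : ((D : ℝ) + 1) * ε₁ = ε / 2 := by
      rw [hε₁def]; field_simp
    nlinarith [hε₁]
  have hhalf2 : (D : ℝ) * (M' * tn) + tn * B' < ε / 2 := by
    have hfac : (0:ℝ) < B' + (D : ℝ) * M' + 1 := by positivity
    have h5 : tn * (B' + (D : ℝ) * M' + 1) < c₂ * (B' + (D : ℝ) * M' + 1) :=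
      mul_lt_mul_of_pos_right htn hfac
    have h6 : c₂ * (B' + (D : ℝ) * M' + 1) = ε / 2 := by
      rw [hc₂def]
      field_simp
    nlinarith [htn0, hM'0, hB'0]
  calc ‖(D : ℝ) • (∫ z in ball (0 : Euc D) δ, E z)
        + (D : ℝ) • (∫ y in Ω \ ball x δ, H y) - cc • g‖
      ≤ (D : ℝ) * ε₁ + (D : ℝ) * (M' * tn) + tn * B' := htotal
    _ < ε := by linarith

end Test4

/-- suboptimal-stepsize comparison of classical and nonlocal gradient descent.
For `u ∈ C²(Ω) ∩ Lip(Ω, M)`, identical initialization and identical stepsizes with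
`Σ_{m=1}^K α^m < 1` for all `K`, the iterates of nonlocal gradient descent get arbitrarily
close to those of classical gradient descent, uniformly over the first `k+1` iterates,
for `n` large enough. -/
theorem nonlocal_gd_suboptimal_stepsize_comparison
    (D : ℕ) (hD : 0 < D) (Ω : Set (Euc D)) (hΩ : NiceDomain D Ω)
    (ρ : ℕ → Euc D → ℝ) (hρ : IsKernelSeq D ρ)
    (M : ℝ) (u : Euc D → ℝ)
    (hC2 : ContDiffOn ℝ 2 u Ω)
    (hLip : ∀ x ∈ Ω, ∀ y ∈ Ω, |u x - u y| ≤ M * ‖x - y‖)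
    (α : ℕ → ℝ) (hα : ∀ k, 0 < α k)
    (hsum : ∀ K : ℕ, ∑ m ∈ Finset.range K, α m < 1)
    (x₀ : Euc D) (hx₀ : x₀ ∈ Ω)
    (x : ℕ → Euc D) (xn : ℕ → ℕ → Euc D)
    (hinit : x 0 = x₀) (hinitn : ∀ n, xn n 0 = x₀)
    (hiter : ∀ k, x (k + 1) = x k - α k • gradient u (x k))
    (hitern : ∀ n k, xn n (k + 1) = xn n k - α k • nlGrad D Ω (ρ n) u (xn n k))
    (V : Set (Euc D)) (hV : IsCompact V) (hVΩ : V ⊆ Ω)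
    (hinV : ∀ k, x k ∈ V) (hinVn : ∀ n k, xn n k ∈ V) :
    ∀ k : ℕ, ∀ ε : ℝ, 0 < ε → ∃ N : ℕ, ∀ n > N,
      ∀ m : ℕ, 1 ≤ m → m ≤ k + 1 → ‖x m - xn n m‖ < ε := by
  have hαlt1 : ∀ m : ℕ, α m < 1 := by
    intro m
    have h1 := hsum (m + 1)
    have h2 : α m ≤ ∑ j ∈ Finset.range (m + 1), α j :=
      Finset.single_le_sum (f := α) (fun j _ => (hα j).le) (Finset.self_mem_range_succ m)
    linarith
  have hf'cont : ContinuousOn (fun w => fderiv ℝ u w) Ω :=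
    hC2.continuousOn_fderiv_of_isOpen hΩ.isOpen (by norm_num)
  have hgc : ContinuousOn (gradient u) Ω := by
    have : gradient u = fun w => (InnerProductSpace.toDual ℝ (Euc D)).symm (fderiv ℝ u w) := rfl
    rw [this]
    exact (InnerProductSpace.toDual ℝ (Euc D)).symm.continuous.comp_continuousOn hf'cont
  have hucg := hV.uniformContinuousOn_of_continuous (hgc.mono hVΩ)
  rw [Metric.uniformContinuousOn_iff] at hucg
  have hkey := Test4.key D hD Ω hΩ.isOpen ρ hρ M u hC2 hLip V hV hVΩ
  have main : ∀ K : ℕ, ∀ ε : ℝ, 0 < ε → ∃ N : ℕ, ∀ n > N, ∀ m ≤ K, ‖x m - xn n m‖ < ε := by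
    intro K
    induction K with
    | zero =>
      intro ε hε
      refine ⟨0, fun n _ m hm => ?_⟩
      interval_cases m
      rw [hinit, hinitn n]
      simpa using hε
    | succ k ih =>
      intro ε hε
      obtain ⟨δ', hδ'0, hδ'⟩ := hucg (ε / 3) (by linarith)
      obtain ⟨N₁, hN₁⟩ := ih (min (ε / 3) δ') (lt_min (by linarith) hδ'0)
      obtain ⟨N₂, hN₂⟩ := hkey (ε / 3) (by linarith)
      refine ⟨max N₁ N₂, fun n hn m hm => ?_⟩
      have hn₁ : n > N₁ := lt_of_le_of_lt (le_max_left _ _) hn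
      have hn₂ : n > N₂ := lt_of_le_of_lt (le_max_right _ _) hn
      rcases Nat.lt_succ_iff_lt_or_eq.1 (Nat.lt_succ_of_le hm) with hmlt | rfl
      · have := hN₁ n hn₁ m (Nat.lt_succ_iff.1 hmlt)
        have h2 : min (ε / 3) δ' ≤ ε / 3 := min_le_left _ _
        linarith
      · -- m = k + 1
        have hek : ‖x k - xn n k‖ < min (ε / 3) δ' := hN₁ n hn₁ k le_rfl
        have he3 : ‖x k - xn n k‖ < ε / 3 := lt_of_lt_of_le hek (min_le_left _ _)
        have hgrad : ‖gradient u (x k) - gradient u (xn n k)‖ < ε / 3 := by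
          have h := hδ' (x k) (hinV k) (xn n k) (hinVn n k)
            (by rw [dist_eq_norm]; exact lt_of_lt_of_le hek (min_le_right _ _))
          rw [dist_eq_norm] at h
          exact h
        have hnl : ‖nlGrad D Ω (ρ n) u (xn n k) - gradient u (xn n k)‖ < ε / 3 :=
          hN₂ n hn₂ (xn n k) (hinVn n k)
        have hstep : x (k + 1) - xn n (k + 1)
            = (x k - xn n k)
              - α k • (gradient u (x k) - nlGrad D Ω (ρ n) u (xn n k)) := by
          rw [hiter k, hitern n k, smul_sub]
          abel
        rw [hstep]
        have htri : ‖gradient u (x k) - nlGrad D Ω (ρ n) u (xn n k)‖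
            ≤ ‖gradient u (x k) - gradient u (xn n k)‖
              + ‖gradient u (xn n k) - nlGrad D Ω (ρ n) u (xn n k)‖ := by
          have heq : gradient u (x k) - nlGrad D Ω (ρ n) u (xn n k)
              = (gradient u (x k) - gradient u (xn n k))
                + (gradient u (xn n k) - nlGrad D Ω (ρ n) u (xn n k)) := by abel
          rw [heq]
          exact norm_add_le _ _
        have hnl' : ‖gradient u (xn n k) - nlGrad D Ω (ρ n) u (xn n k)‖ < ε / 3 := by
          rw [norm_sub_rev]
          exact hnl
        have hsm : ‖α k • (gradient u (x k) - nlGrad D Ω (ρ n) u (xn n k))‖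
            ≤ ‖gradient u (x k) - nlGrad D Ω (ρ n) u (xn n k)‖ := by
          rw [norm_smul, Real.norm_eq_abs, abs_of_pos (hα k)]
          exact mul_le_of_le_one_left (norm_nonneg _) (hαlt1 k).le
        calc ‖(x k - xn n k)
              - α k • (gradient u (x k) - nlGrad D Ω (ρ n) u (xn n k))‖
            ≤ ‖x k - xn n k‖
              + ‖α k • (gradient u (x k) - nlGrad D Ω (ρ n) u (xn n k))‖ := norm_sub_le _ _
          _ ≤ ‖x k - xn n k‖
              + ‖gradient u (x k) - nlGrad D Ω (ρ n) u (xn n k)‖ := by linarith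
          _ < ε := by linarith [htri, hgrad, hnl', he3]
  intro k ε hε
  obtain ⟨N, hN⟩ := main (k + 1) ε hε
  exact ⟨N, fun n hn m _ hm2 => hN n hn m hm2⟩

end
end

section
/- Let u ∈ C²(Ω) ∩ Lip(Ω, M), fix A > 0 and I = [0, A], and run exact-linesearch gradient descent x^{k+1} = x^k − α^k ∇u(x^k) with α^k = argmin_{α∈I} u(x^k − α∇u(x^k)), and nonlocal exact-linesearch gradient descent x^{k+1,n} = x^{k,n} − α^{k,n} ∇_n u(x^{k,n}) with α^{k,n} = argmin_{α∈I} u(x^{k,n} − α∇_n u(x^{k,n})), both from the same initial point x^0 = x^{0,n} for all n, where all iterates remain in Ω (in fact in a compact subset of Ω) and each linesearch minimizer α^{k,n} and α^k is assumed unique. Then for each k there exists a subsequence {α^{k,n_{m₁}(k)}} of {α^{k,n}} with α^{k,n_{m₁}(k)} → α^k, and a subsequence {x^{k,n_{m₂}(k)}} of {x^{k,n}} with x^{k,n_{m₂}(k)} → x^k, as the subsequence indices tend to infinity. -/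
open MeasureTheory Filter Topology Metric

noncomputable section

/-- `a` is the unique minimizer over `I = [0, A]` of `α ↦ u (z - α • d)`. -/
def IsUniqueLinesearchMin (D : ℕ) (u : Euc D → ℝ) (A : ℝ) (z d : Euc D) (a : ℝ) : Prop :=
  a ∈ Set.Icc 0 A ∧ (∀ b ∈ Set.Icc 0 A, u (z - a • d) ≤ u (z - b • d)) ∧
    ∀ b ∈ Set.Icc 0 A, u (z - b • d) = u (z - a • d) → b = a

section AuxLemmas

lemma abs_coord_le {D : ℕ} (w : Euc D) (i : Fin D) : |w i| ≤ ‖w‖ := by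
  have h : w i = (inner ℝ (EuclideanSpace.single i (1:ℝ)) w : ℝ) := by
    simp [EuclideanSpace.inner_single_left]
  rw [h]
  calc |(inner ℝ (EuclideanSpace.single i (1:ℝ)) w : ℝ)| ≤ ‖EuclideanSpace.single i (1:ℝ)‖ * ‖w‖ :=
        abs_real_inner_le_norm _ _
    _ = ‖w‖ := by simp

lemma quot_le_one {D : ℕ} (w : Euc D) (i j : Fin D) : |w i * w j / ‖w‖^2| ≤ 1 := by
  rcases eq_or_ne w 0 with rfl | hw
  · simp
  · have hn : (0:ℝ) < ‖w‖ := norm_pos_iff.mpr hw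
    rw [abs_div, abs_of_nonneg (by positivity : (0:ℝ) ≤ ‖w‖^2), div_le_one (by positivity)]
    rw [abs_mul]
    calc |w i| * |w j| ≤ ‖w‖ * ‖w‖ :=
        mul_le_mul (abs_coord_le w i) (abs_coord_le w j) (abs_nonneg _) (norm_nonneg _)
      _ = ‖w‖^2 := (sq ‖w‖).symm

lemma integrable_quot {D : ℕ} (f : Euc D → ℝ) (hf : Integrable f) (hnn : ∀ x, 0 ≤ f x)
    (r : ℝ) (i j : Fin D) :
    IntegrableOn (fun w => (w i * w j / ‖w‖^2) * f w) (ball (0:Euc D) r) := by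
  have hmeas : AEStronglyMeasurable (fun w : Euc D => (w i * w j / ‖w‖^2) * f w)
      (volume.restrict (ball 0 r)) := by
    apply AEStronglyMeasurable.mul _ (hf.aestronglyMeasurable.restrict)
    apply Measurable.aestronglyMeasurable
    apply Measurable.div
    · exact ((EuclideanSpace.proj (𝕜 := ℝ) i).continuous.measurable).mul
        ((EuclideanSpace.proj (𝕜 := ℝ) j).continuous.measurable)
    · exact (continuous_norm.pow 2).measurable
  refine Integrable.mono' (hf.restrict (s := ball 0 r)) hmeas ?_
  filter_upwards with w
  rw [Real.norm_eq_abs, abs_mul, abs_of_nonneg (hnn w)]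
  calc |w i * w j / ‖w‖^2| * f w ≤ 1 * f w :=
      mul_le_mul_of_nonneg_right (quot_le_one w i j) (hnn w)
    _ = f w := one_mul _

section
variable {D : ℕ} (f : Euc D → ℝ)

def cmat (r : ℝ) (i j : Fin D) : ℝ := ∫ w in ball (0:Euc D) r, (w i * w j / ‖w‖^2) * f w

variable {f}

lemma cov_isometry {D : ℕ} (e : Euc D ≃ₗᵢ[ℝ] Euc D) (r : ℝ) (h : Euc D → ℝ) :
    ∫ w in ball (0:Euc D) r, h w = ∫ w in ball (0:Euc D) r, h (e w) := by
  have hmp := e.measurePreserving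
  have hemb : MeasurableEmbedding e := e.toHomeomorph.measurableEmbedding
  have hpre : e ⁻¹' (ball 0 r) = ball 0 r := by
    ext w; simp [mem_ball, dist_zero_right]
  calc ∫ w in ball (0:Euc D) r, h w
      = ∫ w in e ⁻¹' ball (0:Euc D) r, h (e w) :=
        (hmp.setIntegral_preimage_emb hemb h (ball 0 r)).symm
    _ = ∫ w in ball (0:Euc D) r, h (e w) := by rw [hpre]

lemma cmat_off (hrad : ∀ x y : Euc D, ‖x‖ = ‖y‖ → f x = f y) (r : ℝ) {i j : Fin D}
    (hij : i ≠ j) : cmat f r i j = 0 := by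
  classical
  set e : Euc D ≃ₗᵢ[ℝ] Euc D :=
    LinearIsometryEquiv.piLpCongrRight 2 (fun k => if k = i then .neg ℝ else .refl ℝ ℝ) with he
  have happ : ∀ (w : Euc D) (k : Fin D), (e w) k = if k = i then -(w k) else w k := by
    intro w k
    simp only [he, LinearIsometryEquiv.piLpCongrRight_apply]
    rcases eq_or_ne k i with h | h
    · subst h; simp
    · simp [h]
  have hcov := cov_isometry e r (fun w => (w i * w j / ‖w‖^2) * f w)
  have : cmat f r i j = - cmat f r i j := by
    calc cmat f r i j = ∫ w in ball (0:Euc D) r, ((e w) i * (e w) j / ‖e w‖^2) * f (e w) := hcov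
      _ = ∫ w in ball (0:Euc D) r, -((w i * w j / ‖w‖^2) * f w) := by
          apply setIntegral_congr_fun measurableSet_ball
          intro w _
          have h1 : (e w) i = -(w i) := by rw [happ]; simp
          have h2 : (e w) j = w j := by rw [happ]; simp [hij.symm]
          have h3 : ‖e w‖ = ‖w‖ := e.norm_map w
          have h4 : f (e w) = f w := hrad _ _ h3
          simp only [h1, h2, h3, h4]
          ring
      _ = - cmat f r i j := integral_neg _
  linarith

lemma cmat_diag (hrad : ∀ x y : Euc D, ‖x‖ = ‖y‖ → f x = f y) (r : ℝ) (i j : Fin D) :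
    cmat f r i i = cmat f r j j := by
  set e : Euc D ≃ₗᵢ[ℝ] Euc D := LinearIsometryEquiv.piLpCongrLeft 2 ℝ ℝ (Equiv.swap i j) with he
  have happ : ∀ w : Euc D, (e w) i = w j := by
    intro w
    simp only [he, LinearIsometryEquiv.piLpCongrLeft_apply, Equiv.piCongrLeft',
      Equiv.coe_fn_mk, Equiv.symm_symm_apply]
    simp [Equiv.swap_apply_left]
  have hcov := cov_isometry e r (fun w => (w i * w i / ‖w‖^2) * f w)
  calc cmat f r i i = ∫ w in ball (0:Euc D) r, ((e w) i * (e w) i / ‖e w‖^2) * f (e w) := hcov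
    _ = cmat f r j j := by
        apply setIntegral_congr_fun measurableSet_ball
        intro w _
        have h3 : ‖e w‖ = ‖w‖ := e.norm_map w
        simp only [happ, h3, hrad (e w) w h3]

lemma cmat_trace (hD : 0 < D) (hf : Integrable f) (hnn : ∀ x, 0 ≤ f x)
    (hnn' : True) (r : ℝ) :
    ∑ i : Fin D, cmat f r i i = ∫ w in ball (0:Euc D) r, f w := by
  haveI : Nontrivial (Euc D) := ⟨EuclideanSpace.single ⟨0, hD⟩ (1:ℝ), 0, by
    intro h
    have := congrArg (fun v : Euc D => v ⟨0, hD⟩) h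
    simp [EuclideanSpace.single_apply] at this⟩
  have hint : ∀ i : Fin D, IntegrableOn (fun w : Euc D => (w i * w i / ‖w‖^2) * f w)
      (ball (0:Euc D) r) := fun i => integrable_quot f hf hnn r i i
  calc ∑ i : Fin D, cmat f r i i
      = ∫ w in ball (0:Euc D) r, ∑ i : Fin D, (w i * w i / ‖w‖^2) * f w :=
        (integral_finset_sum Finset.univ (fun i _ => hint i)).symm
    _ = ∫ w in ball (0:Euc D) r, f w := by
        apply integral_congr_ae
        have h0 : (volume.restrict (ball (0:Euc D) r)) {(0:Euc D)} = 0 :=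
          le_antisymm (le_trans (Measure.restrict_le_self _) (by simp)) (by simp)
        have hae : ∀ᵐ w ∂(volume.restrict (ball (0:Euc D) r)), w ≠ (0:Euc D) := by
          rw [ae_iff]
          convert h0 using 2
          ext w; simp
        filter_upwards [hae] with w hw
        have hn : (0:ℝ) < ‖w‖ := norm_pos_iff.mpr hw
        have hsum : ∑ i, w i * w i = ‖w‖^2 := by
          rw [EuclideanSpace.norm_eq, Real.sq_sqrt (by positivity)]
          simp [sq]
        rw [← Finset.sum_mul, ← Finset.sum_div, hsum, div_self (by positivity), one_mul]
lemma integral_coord {D : ℕ} {s : Set (Euc D)} {F : Euc D → Euc D} (hF : IntegrableOn F s)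
    (i : Fin D) : (∫ w in s, F w) i = ∫ w in s, F w i := by
  have := (EuclideanSpace.proj (𝕜 := ℝ) i).integral_comp_comm hF
  simpa using this.symm

lemma integrable_main_vec {D : ℕ} {f : Euc D → ℝ} (hf : Integrable f) (hnn : ∀ x, 0 ≤ f x) (r : ℝ) (v : Euc D) :
    IntegrableOn (fun w : Euc D => (((inner ℝ v w : ℝ) / ‖w‖^2) * f w) • w)
      (ball (0:Euc D) r) := by
  have hmeas : AEStronglyMeasurable (fun w : Euc D => (((inner ℝ v w : ℝ) / ‖w‖^2) * f w) • w)
      (volume.restrict (ball 0 r)) := by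
    apply AEStronglyMeasurable.fun_smul _ aestronglyMeasurable_id
    apply AEStronglyMeasurable.mul _ (hf.aestronglyMeasurable.restrict)
    apply Measurable.aestronglyMeasurable
    exact ((continuous_const.inner continuous_id').measurable).div
      ((continuous_norm.pow 2).measurable)
  refine Integrable.mono' ((hf.restrict (s := ball 0 r)).const_mul ‖v‖) hmeas ?_
  filter_upwards with w
  rcases eq_or_ne w 0 with rfl | hw
  · simp [mul_nonneg (norm_nonneg v) (hnn 0)]
  · have hn : (0:ℝ) < ‖w‖ := norm_pos_iff.mpr hw
    rw [norm_smul, Real.norm_eq_abs, abs_mul, abs_div]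
    calc |(inner ℝ v w : ℝ)| / |‖w‖^2| * |f w| * ‖w‖
        ≤ (‖v‖ * ‖w‖) / ‖w‖^2 * f w * ‖w‖ := by
          rw [abs_of_nonneg (by positivity : (0:ℝ) ≤ ‖w‖^2), abs_of_nonneg (hnn w)]
          gcongr <;> first
            | exact hnn w
            | exact abs_real_inner_le_norm v w
            | positivity
      _ = ‖v‖ * f w := by field_simp
  
lemma radial_main {D : ℕ} {f : Euc D → ℝ} (hD : 0 < D) (hf : Integrable f)
    (hnn : ∀ x, 0 ≤ f x) (hrad : ∀ x y : Euc D, ‖x‖ = ‖y‖ → f x = f y) (r : ℝ) (v : Euc D) :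
    (D:ℝ) • ∫ w in ball (0:Euc D) r, (((inner ℝ v w : ℝ) / ‖w‖^2) * f w) • w
      = (∫ w in ball (0:Euc D) r, f w) • v := by
  refine PiLp.ext fun i => ?_
  have hFv := integrable_main_vec (f := f) hf hnn r v
  have key : ∫ w in ball (0:Euc D) r, (((inner ℝ v w : ℝ) / ‖w‖^2) * f w) * w i
      = ∑ j, v j * cmat f r j i := by
    calc ∫ w in ball (0:Euc D) r, (((inner ℝ v w : ℝ) / ‖w‖^2) * f w) * w i
        = ∫ w in ball (0:Euc D) r, ∑ j, v j * ((w j * w i / ‖w‖^2) * f w) := by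
          apply setIntegral_congr_fun measurableSet_ball
          intro w _
          simp only [PiLp.inner_apply, RCLike.inner_apply, conj_trivial]
          rw [Finset.sum_div, Finset.sum_mul, Finset.sum_mul]
          apply Finset.sum_congr rfl
          intro j _
          ring
      _ = ∑ j, v j * cmat f r j i := by
          rw [integral_finset_sum]
          · apply Finset.sum_congr rfl
            intro j _
            simp only [cmat]
            rw [integral_const_mul]
          · intro j _
            exact (integrable_quot f hf hnn r j i).const_mul _
  have hdiag : (D:ℝ) * cmat f r i i = ∫ w in ball (0:Euc D) r, f w := by
    have : ∑ j : Fin D, cmat f r j j = (D:ℝ) * cmat f r i i := by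
      rw [Finset.sum_congr rfl (fun j _ => cmat_diag hrad r j i)]
      simp [Finset.sum_const, mul_comm]
    rw [← this, cmat_trace hD hf hnn trivial r]
  have hLHS : ((D:ℝ) • ∫ w in ball (0:Euc D) r,
      (((inner ℝ v w : ℝ) / ‖w‖^2) * f w) • w) i
      = (D:ℝ) * ∫ w in ball (0:Euc D) r, (((inner ℝ v w : ℝ) / ‖w‖^2) * f w) * w i := by
    rw [PiLp.smul_apply, integral_coord hFv i, smul_eq_mul]
    congr 1
  rw [hLHS, key, Finset.sum_eq_single i]
  · rw [PiLp.smul_apply, smul_eq_mul, ← hdiag]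
    ring
  · intro j _ hj
    rw [cmat_off hrad r hj, mul_zero]
  · intro h
    exact absurd (Finset.mem_univ i) h
end

-- PART2
lemma inner_gradient_eq {D : ℕ} (u : Euc D → ℝ) (x w : Euc D) :
    (inner ℝ (gradient u x) w : ℝ) = fderiv ℝ u x w := by
  unfold gradient
  exact InnerProductSpace.toDual_symm_apply

lemma nlGrad_cov {D : ℕ} (Ω : Set (Euc D)) (f u : Euc D → ℝ) (x : Euc D) :
    nlGrad D Ω f u x
      = (D:ℝ) • ∫ w in (fun w : Euc D => x - w) ⁻¹' Ω,
          (((u x - u (x - w)) / ‖w‖^2) * f w) • w := by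
  unfold nlGrad
  congr 1
  have hmp : MeasurePreserving (fun w : Euc D => x - w) volume volume :=
    Measure.measurePreserving_sub_left volume x
  have hemb : MeasurableEmbedding (fun w : Euc D => x - w) :=
    (MeasurableEquiv.subLeft x).measurableEmbedding
  rw [← hmp.setIntegral_preimage_emb hemb
    (fun y => (((u x - u y) / ‖x - y‖^2) * f (x - y)) • (x - y)) Ω]
  simp only [sub_sub_cancel]

lemma key_estimate {D : ℕ} (hD : 0 < D) {Ω : Set (Euc D)} (hΩo : IsOpen Ω)
    {u : Euc D → ℝ} {M : ℝ} (hM : 0 ≤ M)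
    (hLip : ∀ x ∈ Ω, ∀ y ∈ Ω, |u x - u y| ≤ M * ‖x - y‖)
    (hu : ContinuousOn u Ω)
    (hdiff : ∀ z ∈ Ω, DifferentiableAt ℝ u z)
    {f : Euc D → ℝ} (hf : Integrable f) (hnn : ∀ x, 0 ≤ f x)
    (hrad : ∀ x y : Euc D, ‖x‖ = ‖y‖ → f x = f y) (h1 : ∫ w, f w = 1)
    {x : Euc D} (hx : x ∈ Ω)
    {δ' : ℝ} (hδ' : 0 < δ') (hball : ball x δ' ⊆ Ω)
    {ε : ℝ} (hε : 0 ≤ ε)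
    (hgrad : ∀ z ∈ ball x δ', ‖fderiv ℝ u z - fderiv ℝ u x‖ ≤ ε) :
    ‖nlGrad D Ω f u x - gradient u x‖
      ≤ (D:ℝ) * M * (∫ w in {w : Euc D | δ'/2 < ‖w‖}, f w)
        + (D:ℝ) * ε
        + (∫ w in {w : Euc D | δ'/2 < ‖w‖}, f w) * ‖gradient u x‖ := by
  classical
  set g : Euc D := gradient u x with hg
  set S : Set (Euc D) := (fun w : Euc D => x - w) ⁻¹' Ω with hS
  have hSopen : IsOpen S := hΩo.preimage (continuous_const.sub continuous_id)
  have hSmeas : MeasurableSet S := hSopen.measurableSet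
  have hBS : ball (0:Euc D) δ' ⊆ S := by
    intro w hw
    have : dist (x - w) x < δ' := by
      rw [dist_eq_norm]
      simpa [dist_zero_right] using hw
    exact hball (mem_ball.mpr this)
  set F : Euc D → Euc D := fun w => (((u x - u (x - w)) / ‖w‖^2) * f w) • w with hF
  -- measurability of F on S
  have hFmeas : AEStronglyMeasurable F (volume.restrict S) := by
    have hc1 : ContinuousOn (fun w : Euc D => u x - u (x - w)) S := by
      apply continuousOn_const.sub
      exact hu.comp ((continuous_const.sub continuous_id).continuousOn) (fun w hw => hw)
    apply AEStronglyMeasurable.fun_smul _ aestronglyMeasurable_id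
    apply AEStronglyMeasurable.mul _ (hf.aestronglyMeasurable.restrict)
    simp only [div_eq_mul_inv]
    exact (hc1.aestronglyMeasurable hSmeas).mul
      (((continuous_norm.pow 2).measurable).inv.aestronglyMeasurable)
  -- pointwise bound on S
  have hFbound : ∀ w ∈ S, ‖F w‖ ≤ M * f w := by
    intro w hw
    rcases eq_or_ne w 0 with rfl | hw0
    · simp [hF, mul_nonneg hM (hnn 0)]
    · have hn : (0:ℝ) < ‖w‖ := norm_pos_iff.mpr hw0
      have hlip := hLip x hx (x - w) hw
      have hxw : ‖x - (x - w)‖ = ‖w‖ := by rw [sub_sub_cancel]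
      rw [hxw] at hlip
      rw [hF]
      simp only
      rw [norm_smul, Real.norm_eq_abs, abs_mul, abs_div,
        abs_of_nonneg (by positivity : (0:ℝ) ≤ ‖w‖^2), abs_of_nonneg (hnn w)]
      calc |u x - u (x - w)| / ‖w‖^2 * f w * ‖w‖
          ≤ (M * ‖w‖) / ‖w‖^2 * f w * ‖w‖ := by
            gcongr <;> first | exact hnn w | exact hlip
        _ = M * f w := by field_simp
  have hFint : IntegrableOn F S := by
    refine Integrable.mono' ((hf.restrict (s := S)).const_mul M) hFmeas ?_
    exact (ae_restrict_iff' hSmeas).mpr (ae_of_all _ hFbound)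
  -- splitting
  have hsplit : ∫ w in S, F w
      = (∫ w in ball (0:Euc D) δ', F w) + ∫ w in S \ ball (0:Euc D) δ', F w := by
    rw [← integral_inter_add_diff measurableSet_ball hFint,
      Set.inter_eq_self_of_subset_right hBS]
  set mainF : Euc D → Euc D := fun w => (((inner ℝ g w : ℝ) / ‖w‖^2) * f w) • w with hmainF
  have hmain_int : IntegrableOn mainF (ball (0:Euc D) δ') := integrable_main_vec hf hnn δ' g
  have hFint_ball : IntegrableOn F (ball (0:Euc D) δ') := hFint.mono_set hBS
  have herr : ∫ w in ball (0:Euc D) δ', F w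
      = (∫ w in ball (0:Euc D) δ', mainF w)
        + ∫ w in ball (0:Euc D) δ', (F w - mainF w) := by
    rw [integral_sub hFint_ball hmain_int]
    abel
  -- error bound
  have herr_bound : ∀ w ∈ ball (0:Euc D) δ', ‖F w - mainF w‖ ≤ ε * f w := by
    intro w hw
    rcases eq_or_ne w 0 with rfl | hw0
    · simp [hF, hmainF, mul_nonneg hε (hnn 0)]
    · have hn : (0:ℝ) < ‖w‖ := norm_pos_iff.mpr hw0
      have hwnorm : ‖w‖ < δ' := by simpa [dist_zero_right] using hw
      have hxw_mem : x - w ∈ ball x δ' := by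
        rw [mem_ball, dist_eq_norm]
        have hxx : x - w - x = -w := by abel
        rw [hxx, norm_neg]
        exact hwnorm
      have hx_mem : x ∈ ball x δ' := mem_ball_self hδ'
      have hmvt := Convex.norm_image_sub_le_of_norm_fderiv_le'
        (f := u) (φ := fderiv ℝ u x) (C := ε) (s := ball x δ')
        (fun z hz => hdiff z (hball hz)) hgrad (convex_ball x δ') hx_mem hxw_mem
      have hsub : (x - w) - x = -w := by abel
      rw [hsub] at hmvt
      have hfd : fderiv ℝ u x (-w) = -(fderiv ℝ u x w) := by
        rw [map_neg]
      rw [hfd, norm_neg] at hmvt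
      have hnum : |u x - u (x - w) - (inner ℝ g w : ℝ)| ≤ ε * ‖w‖ := by
        rw [inner_gradient_eq]
        have : u (x - w) - u x - -(fderiv ℝ u x w) = -(u x - u (x - w) - fderiv ℝ u x w) := by
          ring
        rw [this, norm_neg, Real.norm_eq_abs] at hmvt
        exact hmvt
      have hdiff_eq : F w - mainF w
          = (((u x - u (x - w) - (inner ℝ g w : ℝ)) / ‖w‖^2) * f w) • w := by
        rw [hF, hmainF]
        simp only
        rw [← sub_smul]
        congr 1
        field_simp
      rw [hdiff_eq, norm_smul, Real.norm_eq_abs, abs_mul, abs_div,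
        abs_of_nonneg (by positivity : (0:ℝ) ≤ ‖w‖^2), abs_of_nonneg (hnn w)]
      calc |u x - u (x - w) - (inner ℝ g w : ℝ)| / ‖w‖^2 * f w * ‖w‖
          ≤ (ε * ‖w‖) / ‖w‖^2 * f w * ‖w‖ := by
            gcongr <;> first | exact hnn w | exact hnum
        _ = ε * f w := by field_simp
  have herr_norm : ‖∫ w in ball (0:Euc D) δ', (F w - mainF w)‖ ≤ ε := by
    have hb : ‖∫ w in ball (0:Euc D) δ', (F w - mainF w)‖
        ≤ ∫ w in ball (0:Euc D) δ', ε * f w := by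
      apply norm_integral_le_of_norm_le ((hf.restrict).const_mul ε)
      exact (ae_restrict_iff' measurableSet_ball).mpr (ae_of_all _ herr_bound)
    have : ∫ w in ball (0:Euc D) δ', ε * f w = ε * ∫ w in ball (0:Euc D) δ', f w := by
      rw [integral_const_mul]
    rw [this] at hb
    refine hb.trans ?_
    calc ε * ∫ w in ball (0:Euc D) δ', f w ≤ ε * ∫ w, f w := by
          apply mul_le_mul_of_nonneg_left _ hε
          exact setIntegral_le_integral hf (ae_of_all _ hnn)
      _ = ε := by rw [h1, mul_one]
  -- far bound
  have hfar_norm : ‖∫ w in S \ ball (0:Euc D) δ', F w‖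
      ≤ M * ∫ w in {w : Euc D | δ'/2 < ‖w‖}, f w := by
    have hsub : S \ ball (0:Euc D) δ' ⊆ {w : Euc D | δ'/2 < ‖w‖} := by
      intro w hw
      have : ¬ (‖w‖ < δ') := by simpa [dist_zero_right] using hw.2
      have : δ' ≤ ‖w‖ := not_lt.mp this
      exact lt_of_lt_of_le (by linarith) this
    have hb : ‖∫ w in S \ ball (0:Euc D) δ', F w‖
        ≤ ∫ w in S \ ball (0:Euc D) δ', M * f w := by
      apply norm_integral_le_of_norm_le ((hf.restrict).const_mul M)
      refine (ae_restrict_iff' (hSmeas.diff measurableSet_ball)).mpr (ae_of_all _ ?_)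
      exact fun w hw => hFbound w hw.1
    refine hb.trans ?_
    rw [integral_const_mul]
    apply mul_le_mul_of_nonneg_left _ hM
    apply setIntegral_mono_set (hf.restrict)
    · exact ae_of_all _ hnn
    · exact HasSubset.Subset.eventuallyLE hsub
  -- main identity
  have hmain_id : (D:ℝ) • ∫ w in ball (0:Euc D) δ', mainF w
      = (∫ w in ball (0:Euc D) δ', f w) • g := radial_main hD hf hnn hrad δ' g
  -- ball mass close to 1
  have hball_mass : |(∫ w in ball (0:Euc D) δ', f w) - 1|
      ≤ ∫ w in {w : Euc D | δ'/2 < ‖w‖}, f w := by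
    have hsplit1 : (∫ w in ball (0:Euc D) δ', f w) + ∫ w in (ball (0:Euc D) δ')ᶜ, f w
        = ∫ w, f w := integral_add_compl measurableSet_ball hf
    have hc_nonneg : 0 ≤ ∫ w in (ball (0:Euc D) δ')ᶜ, f w :=
      setIntegral_nonneg measurableSet_ball.compl (fun w _ => hnn w)
    have hc_le : ∫ w in (ball (0:Euc D) δ')ᶜ, f w ≤ ∫ w in {w : Euc D | δ'/2 < ‖w‖}, f w := by
      apply setIntegral_mono_set (hf.restrict)
      · exact ae_of_all _ hnn
      · apply HasSubset.Subset.eventuallyLE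
        intro w hw
        have : ¬ (‖w‖ < δ') := by simpa [dist_zero_right] using hw
        exact lt_of_lt_of_le (by linarith) (not_lt.mp this)
    rw [h1] at hsplit1
    have : (∫ w in ball (0:Euc D) δ', f w) - 1 = -(∫ w in (ball (0:Euc D) δ')ᶜ, f w) := by
      linarith
    rw [this, abs_neg, abs_of_nonneg hc_nonneg]
    exact hc_le
  -- assemble
  have hdecomp : nlGrad D Ω f u x - g
      = ((∫ w in ball (0:Euc D) δ', f w) - 1) • g
        + (D:ℝ) • (∫ w in ball (0:Euc D) δ', (F w - mainF w))
        + (D:ℝ) • (∫ w in S \ ball (0:Euc D) δ', F w) := by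
    rw [nlGrad_cov, ← hS]
    have : (∫ w in S, (((u x - u (x - w)) / ‖w‖^2) * f w) • w) = ∫ w in S, F w := rfl
    rw [this, hsplit, herr]
    rw [smul_add, smul_add, hmain_id, sub_smul, one_smul]
    abel
  rw [hdecomp]
  have tail_nn : 0 ≤ ∫ w in {w : Euc D | δ'/2 < ‖w‖}, f w := by
    apply setIntegral_nonneg _ (fun w _ => hnn w)
    have : IsOpen {w : Euc D | δ'/2 < ‖w‖} := isOpen_lt continuous_const continuous_norm
    exact this.measurableSet
  calc ‖((∫ w in ball (0:Euc D) δ', f w) - 1) • g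
        + (D:ℝ) • (∫ w in ball (0:Euc D) δ', (F w - mainF w))
        + (D:ℝ) • (∫ w in S \ ball (0:Euc D) δ', F w)‖
      ≤ ‖((∫ w in ball (0:Euc D) δ', f w) - 1) • g‖
        + ‖(D:ℝ) • (∫ w in ball (0:Euc D) δ', (F w - mainF w))‖
        + ‖(D:ℝ) • (∫ w in S \ ball (0:Euc D) δ', F w)‖ := norm_add₃_le
    _ ≤ (∫ w in {w : Euc D | δ'/2 < ‖w‖}, f w) * ‖g‖ + (D:ℝ) * ε
        + (D:ℝ) * (M * ∫ w in {w : Euc D | δ'/2 < ‖w‖}, f w) := by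
        gcongr ?_ + ?_ + ?_
        · rw [norm_smul, Real.norm_eq_abs]
          exact mul_le_mul_of_nonneg_right hball_mass (norm_nonneg g)
        · rw [norm_smul, Real.norm_eq_abs, abs_of_nonneg (by positivity : (0:ℝ) ≤ (D:ℝ))]
          exact mul_le_mul_of_nonneg_left herr_norm (by positivity)
        · rw [norm_smul, Real.norm_eq_abs, abs_of_nonneg (by positivity : (0:ℝ) ≤ (D:ℝ))]
          exact mul_le_mul_of_nonneg_left hfar_norm (by positivity)
    _ = (D:ℝ) * M * (∫ w in {w : Euc D | δ'/2 < ‖w‖}, f w) + (D:ℝ) * ε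
        + (∫ w in {w : Euc D | δ'/2 < ‖w‖}, f w) * ‖g‖ := by ring


lemma IsKernelSeq.integrable {D : ℕ} {ρ : ℕ → Euc D → ℝ} (hρ : IsKernelSeq D ρ) (n : ℕ) :
    Integrable (ρ n) := by
  by_contra h
  have := hρ.integral_one n
  rw [integral_undef h] at this
  norm_num at this

lemma nlGrad_tendsto {D : ℕ} (hD : 0 < D) {Ω : Set (Euc D)} (hΩo : IsOpen Ω)
    {ρ : ℕ → Euc D → ℝ} (hρ : IsKernelSeq D ρ)
    {u : Euc D → ℝ} {M : ℝ} (hM : 0 ≤ M)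
    (hLip : ∀ x ∈ Ω, ∀ y ∈ Ω, |u x - u y| ≤ M * ‖x - y‖)
    (hC2 : ContDiffOn ℝ 2 u Ω)
    {V : Set (Euc D)} (hV : IsCompact V) (hVΩ : V ⊆ Ω)
    {z : ℕ → Euc D} (hz : ∀ n, z n ∈ V) {zlim : Euc D} (hzlim : zlim ∈ Ω)
    (hconv : Tendsto z atTop (nhds zlim)) :
    Tendsto (fun n => nlGrad D Ω (ρ n) u (z n)) atTop (nhds (gradient u zlim)) := by
  have hu : ContinuousOn u Ω := hC2.continuousOn
  have hdiff : ∀ y ∈ Ω, DifferentiableAt ℝ u y := fun y hy =>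
    (hC2.differentiableOn (by norm_num)).differentiableAt (hΩo.mem_nhds hy)
  have hfc : ContinuousOn (fderiv ℝ u) Ω :=
    hC2.continuousOn_fderiv_of_isOpen hΩo (by norm_num)
  have hgc : ContinuousOn (fun y => gradient u y) Ω := by
    have : Continuous fun L : (Euc D) →L[ℝ] ℝ => (InnerProductSpace.toDual ℝ (Euc D)).symm L :=
      (InnerProductSpace.toDual ℝ (Euc D)).symm.continuous
    exact this.comp_continuousOn hfc
  obtain ⟨δ, hδpos, hKΩ⟩ := hV.exists_cthickening_subset_open hΩo hVΩ
  set K : Set (Euc D) := cthickening δ V with hK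
  have hKcomp : IsCompact K := hV.cthickening
  have hballK : ∀ x ∈ V, ball x δ ⊆ K :=
    fun x hx => (ball_subset_thickening hx δ).trans (thickening_subset_cthickening δ V)
  obtain ⟨C, hC⟩ := hV.exists_bound_of_continuousOn (hgc.mono hVΩ)
  have hC0 : 0 ≤ C := le_trans (norm_nonneg _) (hC (z 0) (hz 0))
  rw [Metric.tendsto_atTop]
  intro ε hε
  have hden : (0:ℝ) < (D:ℝ) * M + (D:ℝ) + C + 2 := by
    have : (1:ℝ) ≤ (D:ℝ) := by exact_mod_cast hD
    nlinarith
  set ε₀ : ℝ := ε / ((D:ℝ) * M + (D:ℝ) + C + 2) with hε₀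
  have hε₀pos : 0 < ε₀ := div_pos hε hden
  -- uniform continuity of fderiv on K
  have hunif : UniformContinuousOn (fderiv ℝ u) K :=
    hKcomp.uniformContinuousOn_of_continuous (hfc.mono hKΩ)
  rw [Metric.uniformContinuousOn_iff] at hunif
  obtain ⟨δ₁, hδ₁pos, hδ₁⟩ := hunif ε₀ hε₀pos
  set δ' : ℝ := min δ₁ δ with hδ'
  have hδ'pos : 0 < δ' := lt_min hδ₁pos hδpos
  -- tail control
  have htail := hρ.tail (δ'/2) (by positivity)
  rw [Metric.tendsto_atTop] at htail
  obtain ⟨N₁, hN₁⟩ := htail ε₀ hε₀pos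
  -- gradient continuity along the sequence
  have hgrad_seq : Tendsto (fun n => gradient u (z n)) atTop (nhds (gradient u zlim)) :=
    ((hgc.continuousAt (hΩo.mem_nhds hzlim)).tendsto).comp hconv
  rw [Metric.tendsto_atTop] at hgrad_seq
  obtain ⟨N₂, hN₂⟩ := hgrad_seq ε₀ hε₀pos
  refine ⟨max N₁ N₂, fun n hn => ?_⟩
  have hn₁ : N₁ ≤ n := le_trans (le_max_left _ _) hn
  have hn₂ : N₂ ≤ n := le_trans (le_max_right _ _) hn
  set x : Euc D := z n with hxdef
  have hxV : x ∈ V := hz n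
  have hxΩ : x ∈ Ω := hVΩ hxV
  have hballx : ball x δ' ⊆ Ω := fun y hy =>
    hKΩ (hballK x hxV (ball_subset_ball (min_le_right δ₁ δ) hy))
  have hgrad_bound : ∀ w ∈ ball x δ', ‖fderiv ℝ u w - fderiv ℝ u x‖ ≤ ε₀ := by
    intro w hw
    have hwK : w ∈ K := hballK x hxV (ball_subset_ball (min_le_right δ₁ δ) hw)
    have hxK : x ∈ K := self_subset_cthickening V hxV
    have hdist : dist w x < δ₁ := lt_of_lt_of_le (mem_ball.mp hw) (min_le_left δ₁ δ)
    have := hδ₁ w hwK x hxK hdist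
    rw [dist_eq_norm] at this
    exact this.le
  have hkey := key_estimate hD hΩo hM hLip hu hdiff (hρ.integrable n) (hρ.nonneg n)
    (hρ.radial n) (hρ.integral_one n) hxΩ hδ'pos hballx hε₀pos.le hgrad_bound
  set t : ℝ := ∫ w in {w : Euc D | δ'/2 < ‖w‖}, ρ n w with ht
  have htnn : 0 ≤ t := by
    apply setIntegral_nonneg _ (fun w _ => hρ.nonneg n w)
    exact (isOpen_lt continuous_const continuous_norm).measurableSet
  have htle : t ≤ ε₀ := by
    have := hN₁ n hn₁
    rw [Real.dist_eq, sub_zero, abs_of_nonneg htnn] at this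
    exact this.le
  have hgle : ‖gradient u x‖ ≤ C := hC x hxV
  have hgdist : dist (gradient u x) (gradient u zlim) < ε₀ := hN₂ n hn₂
  calc dist (nlGrad D Ω (ρ n) u x) (gradient u zlim)
      ≤ dist (nlGrad D Ω (ρ n) u x) (gradient u x) + dist (gradient u x) (gradient u zlim) :=
        dist_triangle _ _ _
    _ ≤ ((D:ℝ) * M * t + (D:ℝ) * ε₀ + t * ‖gradient u x‖) + ε₀ := by
        apply add_le_add _ hgdist.le
        rw [dist_eq_norm]
        exact hkey
    _ ≤ ((D:ℝ) * M * ε₀ + (D:ℝ) * ε₀ + ε₀ * C) + ε₀ := by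
        have hDM : 0 ≤ (D:ℝ) * M := by positivity
        have h1 : (D:ℝ) * M * t ≤ (D:ℝ) * M * ε₀ := mul_le_mul_of_nonneg_left htle hDM
        have h2 : t * ‖gradient u x‖ ≤ ε₀ * C :=
          mul_le_mul htle hgle (norm_nonneg _) hε₀pos.le
        linarith
    _ = ε₀ * ((D:ℝ) * M + (D:ℝ) + C + 1) := by ring
    _ < ε₀ * ((D:ℝ) * M + (D:ℝ) + C + 2) := by
        apply mul_lt_mul_of_pos_left _ hε₀pos
        linarith
    _ = ε := by
        rw [hε₀]
        field_simp


lemma step_lemma {D : ℕ} (hD : 0 < D) {Ω : Set (Euc D)} (hΩo : IsOpen Ω)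
    {ρ : ℕ → Euc D → ℝ} (hρ : IsKernelSeq D ρ)
    {M : ℝ} (hM : 0 ≤ M) {u : Euc D → ℝ}
    (hC2 : ContDiffOn ℝ 2 u Ω)
    (hLip : ∀ x ∈ Ω, ∀ y ∈ Ω, |u x - u y| ≤ M * ‖x - y‖)
    {A : ℝ} (hA : 0 < A)
    {x : ℕ → Euc D} {xn : ℕ → ℕ → Euc D} {α : ℕ → ℝ} {αn : ℕ → ℕ → ℝ}
    (hls : ∀ k, IsUniqueLinesearchMin D u A (x k) (gradient u (x k)) (α k))
    (hlsn : ∀ n k, IsUniqueLinesearchMin D u A (xn n k) (nlGrad D Ω (ρ n) u (xn n k)) (αn n k))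
    (hiter : ∀ k, x (k + 1) = x k - α k • gradient u (x k))
    (hitern : ∀ n k, xn n (k + 1) = xn n k - αn n k • nlGrad D Ω (ρ n) u (xn n k))
    {V : Set (Euc D)} (hV : IsCompact V) (hVΩ : V ⊆ Ω)
    (hinV : ∀ k, x k ∈ V) (hinVn : ∀ n k, xn n k ∈ V)
    (k : ℕ) {φ : ℕ → ℕ} (hφ : StrictMono φ)
    (hxconv : Tendsto (fun m => xn (φ m) k) atTop (nhds (x k))) :
    ∃ σ : ℕ → ℕ, StrictMono σ ∧
      Tendsto (fun m => αn (φ (σ m)) k) atTop (nhds (α k)) ∧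
      Tendsto (fun m => xn (φ (σ m)) (k + 1)) atTop (nhds (x (k + 1))) := by
  have hρφ : IsKernelSeq D (fun m => ρ (φ m)) :=
    ⟨fun m => hρ.nonneg (φ m), fun m => hρ.radial (φ m), fun m => hρ.integral_one (φ m),
      fun δ hδ => (hρ.tail δ hδ).comp hφ.tendsto_atTop⟩
  set g : Euc D := gradient u (x k) with hg
  set d : ℕ → Euc D := fun m => nlGrad D Ω (ρ (φ m)) u (xn (φ m) k) with hd
  have hdconv : Tendsto d atTop (nhds g) :=
    nlGrad_tendsto hD hΩo hρφ hM hLip hC2 hV hVΩ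
      (fun m => hinVn (φ m) k) (hVΩ (hinV k)) hxconv
  obtain ⟨a, haI, σ, hσ, hαconv⟩ := (isCompact_Icc (a := (0:ℝ)) (b := A)).tendsto_subseq
    (fun m => (hlsn (φ m) k).1)
  have hxconv' : Tendsto (fun m => xn (φ (σ m)) k) atTop (nhds (x k)) :=
    hxconv.comp hσ.tendsto_atTop
  have hdconv' : Tendsto (fun m => d (σ m)) atTop (nhds g) := hdconv.comp hσ.tendsto_atTop
  have hx1 : Tendsto (fun m => xn (φ (σ m)) (k + 1)) atTop (nhds (x k - a • g)) := by
    have : (fun m => xn (φ (σ m)) (k + 1))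
        = fun m => xn (φ (σ m)) k - αn (φ (σ m)) k • d (σ m) := by
      funext m
      rw [hitern (φ (σ m)) k]
    rw [this]
    exact hxconv'.sub (hαconv.smul hdconv')
  have hcont : ∀ p ∈ Ω, ContinuousAt u p := fun p hp =>
    hC2.continuousOn.continuousAt (hΩo.mem_nhds hp)
  have hyV : x k - a • g ∈ V :=
    (hV.isClosed).mem_of_tendsto hx1 (Eventually.of_forall (fun m => hinVn (φ (σ m)) (k + 1)))
  -- limit inequality at b = α k
  have hq : Tendsto (fun m => xn (φ (σ m)) k - α k • d (σ m)) atTop (nhds (x (k + 1))) := by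
    rw [hiter k]
    exact hxconv'.sub (tendsto_const_nhds.smul hdconv')
  have hule : u (x k - a • g) ≤ u (x (k + 1)) := by
    have hle : ∀ m, u (xn (φ (σ m)) (k + 1)) ≤ u (xn (φ (σ m)) k - α k • d (σ m)) := by
      intro m
      have := (hlsn (φ (σ m)) k).2.1 (α k) (hls k).1
      rwa [← hitern (φ (σ m)) k] at this
    have hT1 : Tendsto (fun m => u (xn (φ (σ m)) (k + 1))) atTop (nhds (u (x k - a • g))) :=
      ((hcont _ (hVΩ hyV)).tendsto).comp hx1
    have hT2 : Tendsto (fun m => u (xn (φ (σ m)) k - α k • d (σ m))) atTop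
        (nhds (u (x (k + 1)))) :=
      ((hcont _ (hVΩ (hinV (k + 1)))).tendsto).comp hq
    exact le_of_tendsto_of_tendsto' hT1 hT2 hle
  have huge : u (x (k + 1)) ≤ u (x k - a • g) := by
    have := (hls k).2.1 a haI
    rwa [← hiter k] at this
  have ha : a = α k := by
    apply (hls k).2.2 a haI
    rw [← hiter k]
    exact le_antisymm hule huge
  subst ha
  refine ⟨σ, hσ, hαconv, ?_⟩
  rwa [hiter k]

end AuxLemmas

/-- optimal (exact linesearch) stepsize comparison of classical and nonlocal
gradient descent: for each `k` some subsequence of the nonlocal stepsizes `α^{k,n}` converges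
to the classical stepsize `α^k`, and some subsequence of the nonlocal iterates `x^{k,n}`
converges to the classical iterate `x^k`. -/
theorem nonlocal_gd_optimal_stepsize_comparison
    (D : ℕ) (hD : 0 < D) (Ω : Set (Euc D)) (hΩ : NiceDomain D Ω)
    (ρ : ℕ → Euc D → ℝ) (hρ : IsKernelSeq D ρ)
    (M : ℝ) (u : Euc D → ℝ)
    (hC2 : ContDiffOn ℝ 2 u Ω)
    (hLip : ∀ x ∈ Ω, ∀ y ∈ Ω, |u x - u y| ≤ M * ‖x - y‖)
    (A : ℝ) (hA : 0 < A)
    (x₀ : Euc D) (hx₀ : x₀ ∈ Ω)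
    (x : ℕ → Euc D) (xn : ℕ → ℕ → Euc D) (α : ℕ → ℝ) (αn : ℕ → ℕ → ℝ)
    (hinit : x 0 = x₀) (hinitn : ∀ n, xn n 0 = x₀)
    (hls : ∀ k, IsUniqueLinesearchMin D u A (x k) (gradient u (x k)) (α k))
    (hlsn : ∀ n k, IsUniqueLinesearchMin D u A (xn n k) (nlGrad D Ω (ρ n) u (xn n k)) (αn n k))
    (hiter : ∀ k, x (k + 1) = x k - α k • gradient u (x k))
    (hitern : ∀ n k, xn n (k + 1) = xn n k - αn n k • nlGrad D Ω (ρ n) u (xn n k))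
    (V : Set (Euc D)) (hV : IsCompact V) (hVΩ : V ⊆ Ω)
    (hinV : ∀ k, x k ∈ V) (hinVn : ∀ n k, xn n k ∈ V) :
    ∀ k : ℕ,
      (∃ φ : ℕ → ℕ, StrictMono φ ∧
        Tendsto (fun m => αn (φ m) k) atTop (nhds (α k))) ∧
      (∃ ψ : ℕ → ℕ, StrictMono ψ ∧
        Tendsto (fun m => xn (ψ m) k) atTop (nhds (x k))) := by
  have hM : 0 ≤ M := by
    obtain ⟨r, hr, hball⟩ := Metric.isOpen_iff.mp hΩ.isOpen x₀ hx₀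
    set p : Euc D := x₀ + (r/2) • EuclideanSpace.single (⟨0, hD⟩ : Fin D) (1:ℝ) with hp
    have hnorm : ‖x₀ - p‖ = r / 2 := by
      have h1 : x₀ - p = -((r/2) • EuclideanSpace.single (⟨0, hD⟩ : Fin D) (1:ℝ)) := by
        rw [hp]; abel
      rw [h1, norm_neg, norm_smul, EuclideanSpace.norm_single]
      rw [Real.norm_eq_abs, abs_of_pos (by linarith : (0:ℝ) < r/2)]
      norm_num
    have hpΩ : p ∈ Ω := by
      apply hball
      rw [mem_ball, dist_eq_norm, ← norm_neg, neg_sub, hnorm]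
      linarith
    have hlip := hLip x₀ hx₀ p hpΩ
    rw [hnorm] at hlip
    nlinarith [abs_nonneg (u x₀ - u p)]
  have main : ∀ k : ℕ, ∃ φ : ℕ → ℕ, StrictMono φ ∧
      Tendsto (fun m => xn (φ m) k) atTop (nhds (x k)) := by
    intro k
    induction k with
    | zero =>
        refine ⟨id, strictMono_id, ?_⟩
        have : (fun m : ℕ => xn (id m) 0) = fun _ : ℕ => x 0 := by
          funext m; rw [id, hinitn m, hinit]
        rw [this]
        exact tendsto_const_nhds
    | succ k ih =>
        obtain ⟨φ, hφ, hconv⟩ := ih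
        obtain ⟨σ, hσ, _, hx'⟩ := step_lemma hD hΩ.isOpen hρ hM hC2 hLip hA
          hls hlsn hiter hitern hV hVΩ hinV hinVn k hφ hconv
        exact ⟨φ ∘ σ, hφ.comp hσ, hx'⟩
  intro k
  obtain ⟨φ, hφ, hconv⟩ := main k
  obtain ⟨σ, hσ, hα, _⟩ := step_lemma hD hΩ.isOpen hρ hM hC2 hLip hA
    hls hlsn hiter hitern hV hVΩ hinV hinVn k hφ hconv
  exact ⟨⟨φ ∘ σ, hφ.comp hσ, hα⟩, ⟨φ, hφ, hconv⟩⟩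

end
end
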